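/- arXiv:1309.0055 — 6 statements merged into one kernel-verified Lean document; each statement's English description precedes it below -/
import Mathlib

section
/- Let f be a real entire function admitting the representation f(z) = C·e^{−az²+bz}·∏_{k=1}^{ω}(1 − z/z_k)e^{z/z_k} (0 ≤ ω ≤ ∞, the product converging locally uniformly), where C ∈ ℝ\{0}, a ≥ 0, b ∈ ℝ, each zero z_k satisfies 0 < |z_k| and |Im z_k| ≤ 1, and ∑_k 1/|z_k|² < ∞; in particular f(0) ≠ 0. Denote the real zeros of f by {x_k} and the non-real zeros by z_j = α_j + iβ_j. If there is an interval [A, B] with B − A > 2 such that α_j ∉ [A, B] for every non-real zero, then L₁(x; f) := f′(x)² − f(x)f″(x) ≥ 0 for all x ∈ [A+1, B−1]. -/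
open ComplexOrder

/-- A multipliable product with a zero factor is zero. -/
lemma aux_tprod_eq_zero {u : ℕ → ℂ} (h : Multipliable u) {k : ℕ} (hk : u k = 0) :
    ∏' i, u i = 0 := by
  have hp := h.hasProd
  have hev : ∀ᶠ s : Finset ℕ in Filter.atTop, ∏ i ∈ s, u i = 0 := by
    filter_upwards [Filter.eventually_ge_atTop {k}] with s hs
    exact Finset.prod_eq_zero (hs (Finset.mem_singleton_self k)) hk
  exact tendsto_nhds_unique ((Filter.tendsto_congr' hev).mp hp) tendsto_const_nhds

/-- An entire function that is real on the reals has real derivative on the reals. -/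
lemma aux_im_deriv_zero {g : ℂ → ℂ} (hg : Differentiable ℂ g) (h : ∀ t : ℝ, (g t).im = 0)
    (x : ℝ) : (deriv g x).im = 0 := by
  have h1 : HasDerivAt (fun t : ℝ => g t) (deriv g x) x :=
    (hg (x : ℂ)).hasDerivAt.comp_ofReal
  have h2 : HasDerivAt (fun t : ℝ => (g t).im) (deriv g x).im x := by
    exact (Complex.imCLM.hasFDerivAt.comp_hasDerivAt x h1)
  have h3 : HasDerivAt (fun _ : ℝ => (0 : ℝ)) (deriv g x).im x := by
    refine h2.congr_of_eventuallyEq ?_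
    filter_upwards with t using (h t).symm
  exact (h3.unique (hasDerivAt_const x 0))

/-- Derivative of the log-factor of the Weierstrass factor. -/
lemma aux_hasDerivAt_gson {c z : ℂ} (hne : 1 - z * c ≠ 0) :
    HasDerivAt (fun z => -(z * c ^ 2) * (1 - z * c)⁻¹)
      (-(c ^ 2 * ((1 - z * c)⁻¹) ^ 2)) z := by
  have h0 : HasDerivAt (fun z : ℂ => 1 - z * c) (-c) z := by
    simpa using (hasDerivAt_mul_const c).const_sub 1
  have h1 : HasDerivAt (fun z : ℂ => -(z * c ^ 2)) (-(c ^ 2)) z :=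
    (hasDerivAt_mul_const (c ^ 2)).neg
  have h2 := h0.inv hne
  have h3 := h1.mul h2
  refine h3.congr_deriv (Eq.symm ?_)
  simp only [Pi.inv_apply]
  field_simp
  ring

/-- Derivative of `log (1 - z c) + z c`. -/
lemma aux_hasDerivAt_ell {c z : ℂ} (hs : ‖z * c‖ ≤ 1 / 2) :
    HasDerivAt (fun z => Complex.log (1 - z * c) + z * c)
      (-(z * c ^ 2) * (1 - z * c)⁻¹) z := by
  have hre : (z * c).re ≤ 1 / 2 := le_trans (Complex.re_le_norm _) hs
  have hslit : (1 - z * c) ∈ Complex.slitPlane := by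
    refine Complex.mem_slitPlane_iff.mpr (Or.inl ?_)
    simp only [Complex.sub_re, Complex.one_re]
    linarith
  have hne : 1 - z * c ≠ 0 := Complex.slitPlane_ne_zero hslit
  have h0 : HasDerivAt (fun z : ℂ => 1 - z * c) (-c) z := by
    simpa using (hasDerivAt_mul_const c).const_sub 1
  have hlog : HasDerivAt (fun z : ℂ => Complex.log (1 - z * c)) ((1 - z * c)⁻¹ * -c) z :=
    by have := (Complex.hasDerivAt_log hslit).comp z h0; exact this
  have := hlog.add (hasDerivAt_mul_const c)
  refine this.congr_deriv (Eq.symm ?_)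
  field_simp
  ring

/-- Derivative of a Weierstrass factor. -/
lemma aux_hasDerivAt_factor (c z : ℂ) :
    HasDerivAt (fun z => (1 - z * c) * Complex.exp (z * c))
      (-(z * c ^ 2) * Complex.exp (z * c)) z := by
  have h0 : HasDerivAt (fun z : ℂ => 1 - z * c) (-c) z := by
    simpa using (hasDerivAt_mul_const c).const_sub 1
  have hexp : HasDerivAt (fun z : ℂ => Complex.exp (z * c)) (Complex.exp (z * c) * c) z :=
    (hasDerivAt_mul_const c).cexp
  refine (h0.mul hexp).congr_deriv (Eq.symm ?_)
  ring

/-- Bound for the log factor. -/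
lemma aux_ell_bound {c z : ℂ} (hs : ‖z * c‖ ≤ 1 / 2) :
    ‖Complex.log (1 - z * c) + z * c‖ ≤ ‖z‖ ^ 2 * ‖c‖ ^ 2 := by
  have h1 : ‖-(z * c)‖ < 1 := by rw [norm_neg]; linarith
  have h2 := Complex.norm_log_one_add_sub_self_le h1
  have h3 : Complex.log (1 + -(z * c)) - -(z * c) = Complex.log (1 - z * c) + z * c := by
    ring_nf
  rw [h3] at h2
  rw [norm_neg] at h2
  set t := ‖z * c‖ with ht
  have htn : 0 ≤ t := norm_nonneg _
  have hinv : (1 - t)⁻¹ ≤ 2 := by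
    rw [inv_le_comm₀ (by linarith) (by norm_num)]
    linarith
  have : t ^ 2 * (1 - t)⁻¹ / 2 ≤ t ^ 2 := by
    nlinarith [sq_nonneg t]
  refine le_trans h2 (le_trans this ?_)
  rw [ht, norm_mul, mul_pow]

/-- Nonnegativity of each term in the series. -/
lemma aux_term_nonneg (w : ℂ) (x A B : ℝ) (hx1 : A + 1 ≤ x) (hx2 : x ≤ B - 1)
    (hnz : 1 - (x : ℂ) * w ≠ 0)
    (hstrip : w ≠ 0 → |(w⁻¹).im| ≤ 1)
    (havoid : w ≠ 0 → (w⁻¹).im ≠ 0 → (w⁻¹).re ∉ Set.Icc A B) :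
    0 ≤ (w ^ 2 * ((1 - (x : ℂ) * w)⁻¹) ^ 2).re := by
  by_cases hw : w = 0
  · simp [hw]
  · set ζ : ℂ := w⁻¹ - (x : ℂ) with hζ
    have hζeq : w ^ 2 * ((1 - (x : ℂ) * w)⁻¹) ^ 2 = (ζ ^ 2)⁻¹ := by
      have key : ζ ^ 2 * (w ^ 2 * ((1 - (x : ℂ) * w)⁻¹) ^ 2) = 1 := by
        rw [hζ]
        have hnz' : 1 - w * (x : ℂ) ≠ 0 := by rw [mul_comm]; exact hnz
        field_simp
      exact eq_inv_of_mul_eq_one_right key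
    rw [hζeq, Complex.inv_re]
    refine div_nonneg ?_ (Complex.normSq_nonneg _)
    have hre : ζ.re = (w⁻¹).re - x := by simp [hζ]
    have him : ζ.im = (w⁻¹).im := by simp [hζ]
    rw [sq, Complex.mul_re, hre, him]
    by_cases h0 : (w⁻¹).im = 0
    · rw [h0]; nlinarith [sq_nonneg ((w⁻¹).re - x)]
    · have h1 := abs_le.mp (hstrip hw)
      have h2 := havoid hw h0
      rw [Set.mem_Icc] at h2
      push_neg at h2
      rcases le_or_gt A (w⁻¹).re with hA | hA
      · have hB := h2 hA
        nlinarith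
      · nlinarith

/-- Splitting an infinite product over `ℕ` into head and tail. -/
lemma aux_tprod_split {u : ℕ → ℂ} (N : ℕ) (Q : ℂ)
    (htail : HasProd (fun n => u (n + N)) Q) :
    ∏' k, u k = (∏ k ∈ Finset.range N, u k) * Q := by
  have hhead := (Finset.range N).hasProd u
  have hb' : HasProd ((u ∘ (↑)) ∘ (notMemRangeEquiv N).symm) Q :=
    htail.congr_fun (fun n => rfl)
  have htail' : HasProd ((u ∘ (↑)) : {n : ℕ // n ∉ Finset.range N} → ℂ) Q :=
    ((notMemRangeEquiv N).symm.hasProd_iff).mp hb'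
  exact (hhead.mul_compl htail').tprod_eq

set_option maxHeartbeats 2000000 in
/-- **Proposition 2.2.** Let `f` be a real entire function with the representation
`f(z) = C·e^{−az²+bz}·∏ₖ (1 − z/zₖ)e^{z/zₖ}` where `C ≠ 0`, `a ≥ 0`, `b ∈ ℝ`, the zeros
`zₖ` (recorded via their reciprocals `w k = 1/zₖ`, with `w k = 0` allowed so that the
product may be finite) satisfy `|Im zₖ| ≤ 1` and `∑ 1/|zₖ|² < ∞`.  If there is an interval
`[A, B]` with `B − A > 2` avoided by the real parts of all non-real zeros, then
`L₁(x; f) = f′(x)² − f(x)f″(x) ≥ 0` for all `x ∈ [A+1, B−1]`. -/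
theorem prop_2_2 (f : ℂ → ℂ) (C a b : ℝ) (w : ℕ → ℂ) (A B : ℝ)
    (hent : Differentiable ℂ f)
    (hreal : ∀ x : ℝ, (f x).im = 0)
    (hC : C ≠ 0) (ha : 0 ≤ a)
    (hmul : ∀ z : ℂ, Multipliable fun k => (1 - z * w k) * Complex.exp (z * w k))
    (hrep : ∀ z : ℂ, f z =
      (C : ℂ) * Complex.exp (-(a : ℂ) * z ^ 2 + (b : ℂ) * z) *
        ∏' k, (1 - z * w k) * Complex.exp (z * w k))
    (hstrip : ∀ k, w k ≠ 0 → |((w k)⁻¹).im| ≤ 1)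
    (hsum : Summable fun k => ‖w k‖ ^ 2)
    (hAB : B - A > 2)
    (havoid : ∀ k, w k ≠ 0 → ((w k)⁻¹).im ≠ 0 → ((w k)⁻¹).re ∉ Set.Icc A B) :
    ∀ x : ℝ, x ∈ Set.Icc (A + 1) (B - 1) →
      0 ≤ (deriv f x) ^ 2 - f x * iteratedDeriv 2 f x := by
  have hdf : Differentiable ℂ (deriv f) := by
    have h1 : AnalyticOnNhd ℂ f Set.univ := fun z _ => hent.analyticAt z
    exact fun z => (h1.deriv z (Set.mem_univ z)).differentiableAt
  have himf' : ∀ t : ℝ, (deriv f t).im = 0 := aux_im_deriv_zero hent hreal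
  have himf'' : ∀ t : ℝ, (deriv (deriv f) t).im = 0 := aux_im_deriv_zero hdf himf'
  have hit2 : iteratedDeriv 2 f = deriv (deriv f) := by
    rw [show (2 : ℕ) = 1 + 1 from rfl, iteratedDeriv_succ, iteratedDeriv_one]
  intro x hx
  obtain ⟨hx1, hx2⟩ := hx
  have him : ((deriv f x) ^ 2 - f x * iteratedDeriv 2 f x).im = 0 := by
    rw [hit2]
    simp [Complex.sub_im, Complex.mul_im, pow_two, hreal x, himf' x, himf'' x]
  rw [Complex.le_def]
  refine ⟨?_, by simp [him]⟩
  simp only [Complex.zero_re]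
  by_cases hfx : f (x : ℂ) = 0
  · simp only [hfx, zero_mul, sub_zero]
    rw [pow_two, Complex.mul_re, himf' x]
    simp only [mul_zero, sub_zero]
    exact mul_self_nonneg _
  · -- main case
    have hnz : ∀ k, 1 - (x : ℂ) * w k ≠ 0 := by
      intro k hk
      apply hfx
      rw [hrep]
      have h0 : (1 - (x : ℂ) * w k) * Complex.exp ((x : ℂ) * w k) = 0 := by rw [hk, zero_mul]
      rw [aux_tprod_eq_zero (hmul (x : ℂ)) h0, mul_zero]
    set R : ℝ := |x| + 1 with hRdef
    have hR0 : 0 < R := by positivity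
    have htend : Filter.Tendsto (fun k => ‖w k‖ ^ 2) Filter.atTop (nhds 0) :=
      hsum.tendsto_atTop_zero
    have hev : ∀ᶠ k in Filter.atTop, ‖w k‖ ^ 2 < (1 / (2 * R)) ^ 2 :=
      htend.eventually (gt_mem_nhds (by positivity))
    obtain ⟨N, hN⟩ := Filter.eventually_atTop.mp hev
    have hNle : ∀ k, N ≤ k → ‖w k‖ ≤ 1 / (2 * R) := by
      intro k hk
      have hc : 0 < 1 / (2 * R) := by positivity
      nlinarith [hN k hk, norm_nonneg (w k), hc]
    -- neighborhood where the head factors do not vanish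
    have hHdcont : Continuous (fun z : ℂ =>
        ∏ k ∈ Finset.range N, ((1 - z * w k) * Complex.exp (z * w k))) := by
      apply continuous_finset_prod
      intro k _
      exact (continuous_const.sub (continuous_id.mul continuous_const)).mul
        (Complex.continuous_exp.comp (continuous_id.mul continuous_const))
    have hHdx : (∏ k ∈ Finset.range N, ((1 - (x : ℂ) * w k) * Complex.exp ((x : ℂ) * w k))) ≠ 0 := by
      refine Finset.prod_ne_zero_iff.mpr (fun k _ => ?_)
      exact mul_ne_zero (hnz k) (Complex.exp_ne_zero _)
    have hevHd := hHdcont.continuousAt.eventually_ne hHdx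
    obtain ⟨ε₀, hε₀, hball⟩ := Metric.eventually_nhds_iff.mp hevHd
    set ε : ℝ := min ε₀ 1 with hεdef
    have hε : 0 < ε := lt_min hε₀ one_pos
    set U : Set ℂ := Metric.ball (x : ℂ) ε with hUdef
    have hUopen : IsOpen U := Metric.isOpen_ball
    have hUconn : IsPreconnected U := (convex_ball _ _).isPreconnected
    have hxU : (x : ℂ) ∈ U := Metric.mem_ball_self hε
    have hznorm : ∀ z ∈ U, ‖z‖ < R := by
      intro z hz
      have h1 : dist z (x : ℂ) < ε := Metric.mem_ball.mp hz
      rw [dist_eq_norm] at h1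
      have h2 : ‖z‖ ≤ ‖z - (x : ℂ)‖ + ‖(x : ℂ)‖ := by
        simpa using norm_add_le (z - (x : ℂ)) (x : ℂ)
      have h3 : ‖(x : ℂ)‖ = |x| := by rw [Complex.norm_real, Real.norm_eq_abs]
      have h4 : ε ≤ 1 := min_le_right _ _
      rw [h3] at h2
      rw [hRdef]
      linarith
    have hHdz : ∀ z ∈ U, ∀ k ∈ Finset.range N, 1 - z * w k ≠ 0 := by
      intro z hz k hk
      have h1 := hball (lt_of_lt_of_le (Metric.mem_ball.mp hz) (min_le_left _ _))
      have h2 := Finset.prod_ne_zero_iff.mp h1 k hk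
      exact (mul_ne_zero_iff.mp h2).1
    have hsmall : ∀ z ∈ U, ∀ n : ℕ, ‖z * w (n + N)‖ ≤ 1 / 2 := by
      intro z hz n
      have h1 : ‖w (n + N)‖ ≤ 1 / (2 * R) := hNle _ (Nat.le_add_left N n)
      have h2 : ‖z‖ < R := hznorm z hz
      calc ‖z * w (n + N)‖ = ‖z‖ * ‖w (n + N)‖ := norm_mul _ _
        _ ≤ R * (1 / (2 * R)) := mul_le_mul h2.le h1 (norm_nonneg _) hR0.le
        _ = 1 / 2 := by field_simp
    have htne : ∀ z ∈ U, ∀ n : ℕ, 1 - z * w (n + N) ≠ 0 := by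
      intro z hz n h
      have h1 := hsmall z hz n
      have h2 : z * w (n + N) = 1 := by linear_combination -h
      rw [h2, norm_one] at h1
      norm_num at h1
    have hinv2 : ∀ z ∈ U, ∀ n : ℕ, ‖(1 - z * w (n + N))⁻¹‖ ≤ 2 := by
      intro z hz n
      rw [norm_inv]
      have h2 := hsmall z hz n
      have h3 := norm_sub_norm_le (1 : ℂ) (z * w (n + N))
      rw [norm_one] at h3
      rw [inv_le_comm₀ (by linarith) (by norm_num)]
      linarith
    -- summable bounds
    have hsumN : Summable (fun n : ℕ => ‖w (n + N)‖ ^ 2) :=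
      (summable_nat_add_iff (f := fun k => ‖w k‖ ^ 2) N).mpr hsum
    have hsum1 : Summable (fun n : ℕ => R ^ 2 * ‖w (n + N)‖ ^ 2) := hsumN.mul_left _
    have hsum2 : Summable (fun n : ℕ => 2 * R * ‖w (n + N)‖ ^ 2) := hsumN.mul_left _
    have hsum3 : Summable (fun n : ℕ => 4 * ‖w (n + N)‖ ^ 2) := hsumN.mul_left _
    have hb1 : ∀ z ∈ U, ∀ n : ℕ,
        ‖Complex.log (1 - z * w (n + N)) + z * w (n + N)‖ ≤ R ^ 2 * ‖w (n + N)‖ ^ 2 := by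
      intro z hz n
      refine le_trans (aux_ell_bound (hsmall z hz n)) ?_
      have h2 := hznorm z hz
      have h4 := norm_nonneg z
      exact mul_le_mul_of_nonneg_right (by nlinarith) (sq_nonneg _)
    have hb2 : ∀ z ∈ U, ∀ n : ℕ,
        ‖-(z * w (n + N) ^ 2) * (1 - z * w (n + N))⁻¹‖ ≤ 2 * R * ‖w (n + N)‖ ^ 2 := by
      intro z hz n
      rw [norm_mul, norm_neg, norm_mul, norm_pow]
      have h1 := hinv2 z hz n
      have h2 := hznorm z hz
      calc ‖z‖ * ‖w (n + N)‖ ^ 2 * ‖(1 - z * w (n + N))⁻¹‖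
          ≤ R * ‖w (n + N)‖ ^ 2 * 2 := by
            apply mul_le_mul (mul_le_mul_of_nonneg_right h2.le (sq_nonneg _)) h1
              (norm_nonneg _) (by positivity)
        _ = 2 * R * ‖w (n + N)‖ ^ 2 := by ring
    have hb3 : ∀ z ∈ U, ∀ n : ℕ,
        ‖-(w (n + N) ^ 2 * ((1 - z * w (n + N))⁻¹) ^ 2)‖ ≤ 4 * ‖w (n + N)‖ ^ 2 := by
      intro z hz n
      rw [norm_neg, norm_mul, norm_pow, norm_pow]
      have h1 := hinv2 z hz n
      have h5 : 0 ≤ ‖(1 - z * w (n + N))⁻¹‖ := norm_nonneg _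
      have key : ‖(1 - z * w (n + N))⁻¹‖ ^ 2 ≤ 4 := by nlinarith
      calc ‖w (n + N)‖ ^ 2 * ‖(1 - z * w (n + N))⁻¹‖ ^ 2 ≤ ‖w (n + N)‖ ^ 2 * 4 :=
            mul_le_mul_of_nonneg_left key (sq_nonneg _)
        _ = 4 * ‖w (n + N)‖ ^ 2 := by ring
    have hsumℓ : ∀ z ∈ U, Summable (fun n : ℕ =>
        Complex.log (1 - z * w (n + N)) + z * w (n + N)) := by
      intro z hz
      exact Summable.of_norm_bounded hsum1 (hb1 z hz)
    have hder1 : ∀ (n : ℕ) (z : ℂ), z ∈ U → HasDerivAt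
        (fun z => Complex.log (1 - z * w (n + N)) + z * w (n + N))
        (-(z * w (n + N) ^ 2) * (1 - z * w (n + N))⁻¹) z :=
      fun n z hz => aux_hasDerivAt_ell (hsmall z hz n)
    have hder2 : ∀ (n : ℕ) (z : ℂ), z ∈ U → HasDerivAt
        (fun z => -(z * w (n + N) ^ 2) * (1 - z * w (n + N))⁻¹)
        (-(w (n + N) ^ 2 * ((1 - z * w (n + N))⁻¹) ^ 2)) z :=
      fun n z hz => aux_hasDerivAt_gson (htne z hz n)
    have hT' : ∀ z ∈ U, HasDerivAt
        (fun z => ∑' n : ℕ, (Complex.log (1 - z * w (n + N)) + z * w (n + N)))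
        (∑' n : ℕ, -(z * w (n + N) ^ 2) * (1 - z * w (n + N))⁻¹) z := by
      intro z hz
      exact hasDerivAt_tsum_of_isPreconnected hsum2 hUopen hUconn hder1
        (fun n y hy => hb2 y hy n) hxU (hsumℓ x hxU) hz
    have hsumg' : Summable (fun n : ℕ =>
        -((x : ℂ) * w (n + N) ^ 2) * (1 - (x : ℂ) * w (n + N))⁻¹) :=
      Summable.of_norm_bounded hsum2 (fun n => hb2 x hxU n)
    have hT'' : ∀ z ∈ U, HasDerivAt
        (fun z => ∑' n : ℕ, -(z * w (n + N) ^ 2) * (1 - z * w (n + N))⁻¹)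
        (∑' n : ℕ, -(w (n + N) ^ 2 * ((1 - z * w (n + N))⁻¹) ^ 2)) z := by
      intro z hz
      exact hasDerivAt_tsum_of_isPreconnected hsum3 hUopen hUconn hder2
        (fun n y hy => hb3 y hy n) hxU hsumg' hz
    -- product representation on U
    have hfF : ∀ z ∈ U, f z = ((C : ℂ) * Complex.exp (-(a : ℂ) * z ^ 2 + (b : ℂ) * z)) *
        ((∏ k ∈ Finset.range N, ((1 - z * w k) * Complex.exp (z * w k))) *
          Complex.exp (∑' n : ℕ, (Complex.log (1 - z * w (n + N)) + z * w (n + N)))) := by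
      intro z hz
      have hp2 : HasProd (fun n : ℕ => (1 - z * w (n + N)) * Complex.exp (z * w (n + N)))
          (Complex.exp (∑' n : ℕ,
            (Complex.log (1 - z * w (n + N)) + z * w (n + N)))) := by
        apply ((hsumℓ z hz).hasSum.cexp).congr_fun
        intro n
        simp only [Function.comp_apply]
        rw [Complex.exp_add, Complex.exp_log (htne z hz n)]
      rw [hrep z, aux_tprod_split N _ hp2, mul_assoc]
    -- logarithmic derivative of f on U
    have hf' : ∀ z ∈ U, HasDerivAt f (f z * ((-(a : ℂ) * (2 * z) + b) +
        ((∑ k ∈ Finset.range N, -(z * w k ^ 2) * (1 - z * w k)⁻¹) +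
          ∑' n : ℕ, -(z * w (n + N) ^ 2) * (1 - z * w (n + N))⁻¹))) z := by
      intro z hz
      have h1 : HasDerivAt (fun z : ℂ => z ^ 2) (2 * z) z := by
        simpa using hasDerivAt_pow 2 z
      have h2 : HasDerivAt (fun z : ℂ => (b : ℂ) * z) (b : ℂ) z := by
        simpa using (hasDerivAt_id z).const_mul (b : ℂ)
      have hinner : HasDerivAt (fun z : ℂ => -(a : ℂ) * z ^ 2 + (b : ℂ) * z)
          (-(a : ℂ) * (2 * z) + b) z := (h1.const_mul _).add h2
      have hE : HasDerivAt (fun z : ℂ => (C : ℂ) * Complex.exp (-(a : ℂ) * z ^ 2 + (b : ℂ) * z))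
          (((C : ℂ) * Complex.exp (-(a : ℂ) * z ^ 2 + (b : ℂ) * z)) * (-(a : ℂ) * (2 * z) + b))
          z := by
        have h3 := (hinner.cexp).const_mul (C : ℂ)
        refine h3.congr_deriv (Eq.symm ?_)
        ring
      have hHd : HasDerivAt (fun z : ℂ =>
          ∏ k ∈ Finset.range N, ((1 - z * w k) * Complex.exp (z * w k)))
          ((∏ k ∈ Finset.range N, ((1 - z * w k) * Complex.exp (z * w k))) *
            ∑ k ∈ Finset.range N, -(z * w k ^ 2) * (1 - z * w k)⁻¹) z := by
        have h4 := HasDerivAt.fun_finsetProd (u := Finset.range N)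
          (f := fun k z => (1 - z * w k) * Complex.exp (z * w k))
          (f' := fun k => -(z * w k ^ 2) * Complex.exp (z * w k))
          (x := z) (fun k _ => aux_hasDerivAt_factor (w k) z)
        refine h4.congr_deriv (Eq.symm ?_)
        rw [Finset.mul_sum]
        refine Finset.sum_congr rfl (fun k hk => ?_)
        beta_reduce
        have hne := hHdz z hz k hk
        rw [smul_eq_mul]
        rw [show -(z * w k ^ 2) * Complex.exp (z * w k) =
          ((1 - z * w k) * Complex.exp (z * w k)) * (-(z * w k ^ 2) * (1 - z * w k)⁻¹) from by
            field_simp]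
        rw [← Finset.prod_erase_mul (Finset.range N)
          (fun j => (1 - z * w j) * Complex.exp (z * w j)) hk]
        ring
      have hexpT := (hT' z hz).cexp
      have hF := hE.mul (hHd.mul hexpT)
      have hfeq : f =ᶠ[nhds z] (fun z => ((C : ℂ) *
          Complex.exp (-(a : ℂ) * z ^ 2 + (b : ℂ) * z)) *
          ((∏ k ∈ Finset.range N, ((1 - z * w k) * Complex.exp (z * w k))) *
            Complex.exp (∑' n : ℕ,
              (Complex.log (1 - z * w (n + N)) + z * w (n + N))))) := by
        filter_upwards [hUopen.mem_nhds hz] with y hy using hfF y hy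
      have hFf := hF.congr_of_eventuallyEq hfeq
      refine hFf.congr_deriv (Eq.symm ?_)
      rw [hfF z hz]
      simp only [Pi.mul_apply]
      ring
    -- derivative of the logarithmic derivative at x
    have hG' : HasDerivAt (fun z : ℂ => (-(a : ℂ) * (2 * z) + b) +
        ((∑ k ∈ Finset.range N, -(z * w k ^ 2) * (1 - z * w k)⁻¹) +
          ∑' n : ℕ, -(z * w (n + N) ^ 2) * (1 - z * w (n + N))⁻¹))
        ((-(a : ℂ) * 2) + ((∑ k ∈ Finset.range N, -(w k ^ 2 * ((1 - (x : ℂ) * w k)⁻¹) ^ 2)) +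
          ∑' n : ℕ, -(w (n + N) ^ 2 * ((1 - (x : ℂ) * w (n + N))⁻¹) ^ 2))) (x : ℂ) := by
      have hlin : HasDerivAt (fun z : ℂ => -(a : ℂ) * (2 * z) + b) (-(a : ℂ) * 2) (x : ℂ) := by
        have h5 : HasDerivAt (fun z : ℂ => 2 * z) (2 : ℂ) (x : ℂ) := by
          simpa using (hasDerivAt_id ((x : ℝ) : ℂ)).const_mul (2 : ℂ)
        simpa using (h5.const_mul (-(a : ℂ))).add_const (b : ℂ)
      have hhead : HasDerivAt (fun z : ℂ =>
          ∑ k ∈ Finset.range N, -(z * w k ^ 2) * (1 - z * w k)⁻¹)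
          (∑ k ∈ Finset.range N, -(w k ^ 2 * ((1 - (x : ℂ) * w k)⁻¹) ^ 2)) (x : ℂ) :=
        HasDerivAt.fun_sum (fun k _ => aux_hasDerivAt_gson (hnz k))
      exact hlin.add (hhead.add (hT'' x hxU))
    -- summability of the full series
    have hsum_v_tail : Summable (fun n : ℕ =>
        w (n + N) ^ 2 * ((1 - (x : ℂ) * w (n + N))⁻¹) ^ 2) := by
      apply Summable.of_norm_bounded hsum3
      intro n
      have h6 := hb3 x hxU n
      rwa [norm_neg] at h6
    have hsum_v : Summable (fun k : ℕ => w k ^ 2 * ((1 - (x : ℂ) * w k)⁻¹) ^ 2) :=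
      (summable_nat_add_iff N).mp hsum_v_tail
    have hsplit : ∑' k : ℕ, w k ^ 2 * ((1 - (x : ℂ) * w k)⁻¹) ^ 2 =
        (∑ k ∈ Finset.range N, w k ^ 2 * ((1 - (x : ℂ) * w k)⁻¹) ^ 2) +
          ∑' n : ℕ, w (n + N) ^ 2 * ((1 - (x : ℂ) * w (n + N))⁻¹) ^ 2 :=
      (hsum_v.sum_add_tsum_nat_add N).symm
    -- the key identity
    have hL : (deriv f x) ^ 2 - f x * iteratedDeriv 2 f x =
        (f x) ^ 2 * ((2 * (a : ℂ)) + ∑' k : ℕ, w k ^ 2 * ((1 - (x : ℂ) * w k)⁻¹) ^ 2) := by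
      have hdf1 := (hf' x hxU).deriv
      have hev2 : deriv f =ᶠ[nhds ((x : ℝ) : ℂ)] (fun z => f z * ((-(a : ℂ) * (2 * z) + b) +
          ((∑ k ∈ Finset.range N, -(z * w k ^ 2) * (1 - z * w k)⁻¹) +
            ∑' n : ℕ, -(z * w (n + N) ^ 2) * (1 - z * w (n + N))⁻¹))) := by
        filter_upwards [hUopen.mem_nhds hxU] with z hz using (hf' z hz).deriv
      rw [hit2, hev2.deriv_eq, ((hf' x hxU).fun_mul hG').deriv, hdf1, hsplit,
        Finset.sum_neg_distrib, tsum_neg]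
      ring
    rw [hL]
    have hfxre : f (x : ℂ) = ((f (x : ℂ)).re : ℝ) := by
      apply Complex.ext
      · simp
      · simp [hreal x]
    have h7 : (f ((x : ℝ) : ℂ)) ^ 2 = ((((f ((x : ℝ) : ℂ)).re) ^ 2 : ℝ) : ℂ) := by
      rw [hfxre]
      simp only [Complex.ofReal_re]
      push_cast
      ring
    rw [h7, Complex.re_ofReal_mul]
    apply mul_nonneg (sq_nonneg _)
    rw [Complex.add_re]
    have hSre : (∑' k : ℕ, w k ^ 2 * ((1 - (x : ℂ) * w k)⁻¹) ^ 2).re =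
        ∑' k : ℕ, (w k ^ 2 * ((1 - (x : ℂ) * w k)⁻¹) ^ 2).re := by
      have := Complex.reCLM.map_tsum hsum_v
      simpa using this
    rw [hSre]
    have h2a : ((2 * (a : ℂ))).re = 2 * a := by simp
    rw [h2a]
    have hterm : ∀ k : ℕ, 0 ≤ (w k ^ 2 * ((1 - (x : ℂ) * w k)⁻¹) ^ 2).re :=
      fun k => aux_term_nonneg (w k) x A B hx1 hx2 (hnz k) (hstrip k) (havoid k)
    have htsum : 0 ≤ ∑' k : ℕ, (w k ^ 2 * ((1 - (x : ℂ) * w k)⁻¹) ^ 2).re :=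
      tsum_nonneg hterm
    linarith
end

section
/- Let g be a real entire function, let α ∈ ℝ, β > 0, m ∈ ℕ with m ≥ 1, and define f(x) := ((x − α)² + β²)^m · g(x), so that α ± iβ are non-real zeros of f of order m. If g(α) ≠ 0, then L₁(α; f) = −2m·β^{4m−2}·g(α)² + β^{4m}·L₁(α; g). Consequently, for fixed g, α and m with g(α) ≠ 0, there exists M > 0 such that L₁(α; f) < 0 for all 0 < β < M. -/
open ComplexOrder

/-- The first Laguerre expression `L₁(x; f) = f′(x)² − f(x)f″(x)`. -/
noncomputable def L1 (f : ℂ → ℂ) (x : ℂ) : ℂ :=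
  (deriv f x) ^ 2 - f x * iteratedDeriv 2 f x

lemma im_deriv_zero (g : ℂ → ℂ) (hent : Differentiable ℂ g)
    (hreal : ∀ x : ℝ, (g x).im = 0) (x : ℝ) : (deriv g x).im = 0 := by
  have h1 : HasDerivAt (fun t : ℝ => g t) (deriv g x) x :=
    (hent _).hasDerivAt.comp_ofReal
  have h2 : HasDerivAt (fun t : ℝ => (g t).im) ((deriv g x).im) x :=
    (Complex.imCLM.hasFDerivAt.comp_hasDerivAt x h1)
  have heq : (fun t : ℝ => (g t).im) = fun _ => (0 : ℝ) := funext hreal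
  rw [heq] at h2
  exact h2.unique (hasDerivAt_const x 0)

/-- **Proposition 2.3.** Let `g` be a real entire function, `α ∈ ℝ`, `β > 0`, `m ≥ 1`, and
`f(x) := ((x − α)² + β²)^m · g(x)`.  If `g(α) ≠ 0`, then
`L₁(α; f) = −2m·β^{4m−2}·g(α)² + β^{4m}·L₁(α; g)`; consequently there is an `M > 0` such
that `L₁(α; f) < 0` for all `0 < β < M`. -/
theorem prop_2_3 (g : ℂ → ℂ) (α : ℝ) (m : ℕ)
    (hent : Differentiable ℂ g) (hreal : ∀ x : ℝ, (g x).im = 0)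
    (hm : 1 ≤ m) (hgα : g (α : ℂ) ≠ 0) :
    (∀ β : ℝ, 0 < β →
      L1 (fun z => ((z - (α : ℂ)) ^ 2 + (β : ℂ) ^ 2) ^ m * g z) (α : ℂ) =
        -2 * (m : ℂ) * (β : ℂ) ^ (4 * m - 2) * (g (α : ℂ)) ^ 2 +
          (β : ℂ) ^ (4 * m) * L1 g (α : ℂ)) ∧
    ∃ M : ℝ, 0 < M ∧ ∀ β : ℝ, 0 < β → β < M →
      L1 (fun z => ((z - (α : ℂ)) ^ 2 + (β : ℂ) ^ 2) ^ m * g z) (α : ℂ) < 0 := by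
  have hd : Differentiable ℂ (deriv g) :=
    Complex.analyticOnNhd_univ_iff_differentiable.mp
      ((Complex.analyticOnNhd_univ_iff_differentiable.mpr hent).deriv)
  -- first derivative formula, for every β and every z
  have key : ∀ β : ℝ,
      deriv (fun z => ((z - (α : ℂ)) ^ 2 + (β : ℂ) ^ 2) ^ m * g z) =
        fun z => (m : ℂ) * ((z - (α : ℂ)) ^ 2 + (β : ℂ) ^ 2) ^ (m - 1) *
            (2 * (z - (α : ℂ))) * g z +
          ((z - (α : ℂ)) ^ 2 + (β : ℂ) ^ 2) ^ m * deriv g z := by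
    intro β
    funext z
    have hp : HasDerivAt (fun z : ℂ => (z - (α : ℂ)) ^ 2 + (β : ℂ) ^ 2)
        (2 * (z - (α : ℂ))) z := by
      simpa using (((hasDerivAt_id z).sub_const (α : ℂ)).pow 2).add_const ((β : ℂ) ^ 2)
    have := (hp.pow m).mul (hent z).hasDerivAt
    change deriv ((fun z : ℂ => (z - (α : ℂ)) ^ 2 + (β : ℂ) ^ 2) ^ m * g) z = _
    simpa [mul_comm, mul_assoc, mul_left_comm] using this.deriv
  -- value of the first derivative at α
  have hderiv1 : ∀ β : ℝ,
      deriv (fun z => ((z - (α : ℂ)) ^ 2 + (β : ℂ) ^ 2) ^ m * g z) (α : ℂ) =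
        ((β : ℂ) ^ 2) ^ m * deriv g (α : ℂ) := by
    intro β
    rw [key β]
    simp
  -- value of the second derivative at α
  have hderiv2 : ∀ β : ℝ,
      iteratedDeriv 2 (fun z => ((z - (α : ℂ)) ^ 2 + (β : ℂ) ^ 2) ^ m * g z) (α : ℂ) =
        2 * (m : ℂ) * ((β : ℂ) ^ 2) ^ (m - 1) * g (α : ℂ) +
          ((β : ℂ) ^ 2) ^ m * deriv (deriv g) (α : ℂ) := by
    intro β
    rw [iteratedDeriv_succ, iteratedDeriv_one, key β]
    have hq : HasDerivAt (fun z : ℂ => (z - (α : ℂ)) ^ 2 + (β : ℂ) ^ 2)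
        (2 * ((α : ℂ) - (α : ℂ))) (α : ℂ) := by
      simpa using
        (((hasDerivAt_id ((α : ℂ))).sub_const (α : ℂ)).pow 2).add_const ((β : ℂ) ^ 2)
    have hlin : HasDerivAt (fun z : ℂ => 2 * (z - (α : ℂ))) 2 (α : ℂ) := by
      simpa using ((hasDerivAt_id ((α : ℂ))).sub_const (α : ℂ)).const_mul (2 : ℂ)
    have hA := (((hq.pow (m - 1)).const_mul (m : ℂ)).mul hlin).mul (hent _).hasDerivAt
    have hB := (hq.pow m).mul (hd _).hasDerivAt
    have := (hA.add hB).deriv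
    refine this.trans ?_
    simp only [Pi.mul_apply, Pi.pow_apply, sub_self, mul_zero, zero_mul, add_zero, zero_add, ne_eq,
      OfNat.ofNat_ne_zero, not_false_eq_true, zero_pow]
    ring
  -- real part facts
  have hG0 : g (α : ℂ) = ((g (α : ℂ)).re : ℂ) := by
    exact Complex.ext rfl (by simp [hreal α])
  have hG1 : deriv g (α : ℂ) = ((deriv g (α : ℂ)).re : ℂ) :=
    Complex.ext rfl (by simp [im_deriv_zero g hent hreal α])
  have hG2 : deriv (deriv g) (α : ℂ) = ((deriv (deriv g) (α : ℂ)).re : ℂ) :=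
    Complex.ext rfl (by simp [im_deriv_zero (deriv g) hd (im_deriv_zero g hent hreal) α])
  have hiter : iteratedDeriv 2 g (α : ℂ) = deriv (deriv g) (α : ℂ) := by
    rw [iteratedDeriv_succ, iteratedDeriv_one]
  have part1 : ∀ β : ℝ, 0 < β →
      L1 (fun z => ((z - (α : ℂ)) ^ 2 + (β : ℂ) ^ 2) ^ m * g z) (α : ℂ) =
        -2 * (m : ℂ) * (β : ℂ) ^ (4 * m - 2) * (g (α : ℂ)) ^ 2 +
          (β : ℂ) ^ (4 * m) * L1 g (α : ℂ) := by
    intro β hβ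
    have e1 : ((β : ℂ) ^ 2) ^ m * ((β : ℂ) ^ 2) ^ (m - 1) = (β : ℂ) ^ (4 * m - 2) := by
      rw [← pow_mul, ← pow_mul, ← pow_add]
      congr 1
      omega
    have e2 : (((β : ℂ) ^ 2) ^ m) ^ 2 = (β : ℂ) ^ (4 * m) := by
      rw [← pow_mul, ← pow_mul]
      congr 1
      omega
    simp only [L1, hderiv1 β, hderiv2 β, hiter]
    linear_combination (deriv g (α : ℂ) ^ 2 - g (α : ℂ) * deriv (deriv g) (α : ℂ)) * e2 -
      2 * (m : ℂ) * g (α : ℂ) ^ 2 * e1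
  refine ⟨part1, ?_⟩
  -- second part
  set c : ℝ := (g (α : ℂ)).re ^ 2 with hc
  have hcpos : 0 < c := by
    have : (g (α : ℂ)).re ≠ 0 := by
      intro h
      exact hgα (by rw [hG0, h]; simp)
    positivity
  set L : ℝ := (L1 g (α : ℂ)).re with hL
  have hcast : L1 g (α : ℂ) =
      (((deriv g (α : ℂ)).re ^ 2 - (g (α : ℂ)).re * (deriv (deriv g) (α : ℂ)).re : ℝ) : ℂ) := by
    simp only [L1, hiter]
    rw [hG0, hG1, hG2]
    push_cast
    simp
  have hLre : L1 g (α : ℂ) = (L : ℂ) := by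
    rw [hL, hcast, Complex.ofReal_re]
  have hmpos : (0 : ℝ) < m := by exact_mod_cast hm
  have hMpos : 0 < 2 * m * c / (|L| + 1) := by positivity
  refine ⟨Real.sqrt (2 * m * c / (|L| + 1)), Real.sqrt_pos.mpr hMpos, ?_⟩
  intro β hβ hβM
  have hβ2 : β ^ 2 < 2 * m * c / (|L| + 1) := by
    have := Real.sq_sqrt hMpos.le
    nlinarith [Real.sqrt_pos.mpr hMpos]
  have hkey : β ^ 2 * L < 2 * m * c := by
    have h1 : β ^ 2 * L ≤ β ^ 2 * |L| := by
      have := le_abs_self L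
      nlinarith [sq_nonneg β]
    have h2 : β ^ 2 * (|L| + 1) < 2 * m * c := by
      have hpos : (0 : ℝ) < |L| + 1 := by positivity
      calc β ^ 2 * (|L| + 1) < (2 * m * c / (|L| + 1)) * (|L| + 1) := by
            exact mul_lt_mul_of_pos_right hβ2 hpos
        _ = 2 * m * c := by field_simp
    nlinarith [sq_nonneg β, abs_nonneg L]
  -- the value as a real number
  have hval : L1 (fun z => ((z - (α : ℂ)) ^ 2 + (β : ℂ) ^ 2) ^ m * g z) (α : ℂ) =
      ((β ^ (4 * m - 2) * (β ^ 2 * L - 2 * m * c) : ℝ) : ℂ) := by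
    rw [part1 β hβ, hLre, hG0, hc]
    have e3 : (β : ℂ) ^ (4 * m) = (β : ℂ) ^ (4 * m - 2) * (β : ℂ) ^ 2 := by
      rw [← pow_add]
      congr 1
      omega
    rw [e3]
    push_cast
    ring
  rw [hval]
  have : β ^ (4 * m - 2) * (β ^ 2 * L - 2 * m * c) < 0 := by
    apply mul_neg_of_pos_of_neg
    · positivity
    · linarith
  calc ((β ^ (4 * m - 2) * (β ^ 2 * L - 2 * m * c) : ℝ) : ℂ) < ((0 : ℝ) : ℂ) :=
        Complex.real_lt_real.mpr this
    _ = 0 := by norm_cast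
end

section
/- Let f be a real entire function with f not identically zero. If Lₙ(x; f) ≥ 0 for every n ∈ ℕ₀ and every x ∈ ℝ, then every zero of f in the complex plane is real. -/
open ComplexOrder

/-- The `n`-th generalized Laguerre expression
`Lₙ(x; f) := ∑_{j=0}^{2n} ((−1)^{j+n}/(2n)!)·C(2n,j)·f^{(j)}(x)·f^{(2n−j)}(x)`. -/
noncomputable def Lag (f : ℂ → ℂ) (n : ℕ) (x : ℂ) : ℂ :=
  ∑ j ∈ Finset.range (2 * n + 1),
    (-1 : ℂ) ^ (j + n) / (Nat.factorial (2 * n)) * (Nat.choose (2 * n) j) *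
      iteratedDeriv j f x * iteratedDeriv (2 * n - j) f x

lemma pow_I_neg_I {n j : ℕ} (hj : j ≤ n) :
    (Complex.I) ^ j * (-Complex.I) ^ (n - j) = (-1 : ℂ) ^ (n + j) * Complex.I ^ n := by
  rw [neg_pow]
  have h1 : Complex.I ^ j * Complex.I ^ (n - j) = Complex.I ^ n := by
    rw [← pow_add, Nat.add_sub_cancel' hj]
  have h2 : (-1 : ℂ) ^ (n - j) = (-1 : ℂ) ^ (n + j) := by
    have : n + j = (n - j) + 2 * j := by omega
    rw [this, pow_add, pow_mul]
    norm_num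
  calc Complex.I ^ j * ((-1 : ℂ) ^ (n - j) * Complex.I ^ (n - j))
      = (-1:ℂ) ^ (n-j) * (Complex.I ^ j * Complex.I ^ (n-j)) := by ring
    _ = (-1:ℂ) ^ (n+j) * Complex.I ^ n := by rw [h1, h2]

/-- The coefficient sequence of the Taylor expansion of `t ↦ f(x+it)·f(x−it)`. -/
noncomputable def lagC (f : ℂ → ℂ) (x : ℂ) (n : ℕ) : ℂ :=
  ∑ j ∈ Finset.range (n + 1),
    Complex.I ^ j * (-Complex.I) ^ (n - j) * ((j.factorial : ℂ))⁻¹ *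
      (((n - j).factorial : ℂ))⁻¹ * iteratedDeriv j f x * iteratedDeriv (n - j) f x

lemma lagC_odd (f : ℂ → ℂ) (x : ℂ) {n : ℕ} (hn : Odd n) : lagC f x n = 0 := by
  set T : ℕ → ℂ := fun j => Complex.I ^ j * (-Complex.I) ^ (n - j) * ((j.factorial : ℂ))⁻¹ *
      (((n - j).factorial : ℂ))⁻¹ * iteratedDeriv j f x * iteratedDeriv (n - j) f x with hT
  have hterm : ∀ j ∈ Finset.range (n + 1), T (n + 1 - 1 - j) = -(T j) := by
    intro j hj
    rw [Finset.mem_range] at hj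
    have hj' : j ≤ n := by omega
    have h1 : n + 1 - 1 - j = n - j := by omega
    have h2 : n - (n - j) = j := by omega
    have e := pow_I_neg_I (Nat.sub_le n j)
    rw [h2] at e
    simp only [hT, h1, h2]
    rw [e, pow_I_neg_I hj']
    have h3 : (-1 : ℂ) ^ (n + (n - j)) = -(-1 : ℂ) ^ (n + j) := by
      obtain ⟨m, hm⟩ := hn
      rcases Nat.even_or_odd j with hj2 | hj2
      · obtain ⟨k, hk⟩ := hj2
        have e1 : Even (n + (n - j)) := ⟨(2*m+1) - k, by omega⟩
        have e2 : Odd (n + j) := ⟨m + k, by omega⟩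
        rw [e1.neg_one_pow, e2.neg_one_pow]; norm_num
      · obtain ⟨k, hk⟩ := hj2
        have e1 : Odd (n + (n - j)) := ⟨m + (m - k), by omega⟩
        have e2 : Even (n + j) := ⟨m + k + 1, by omega⟩
        rw [e1.neg_one_pow, e2.neg_one_pow]
    rw [h3]
    ring
  have key : lagC f x n = -lagC f x n := by
    calc lagC f x n = ∑ j ∈ Finset.range (n + 1), T j := rfl
      _ = ∑ j ∈ Finset.range (n + 1), T (n + 1 - 1 - j) := (Finset.sum_range_reflect T (n+1)).symm
      _ = ∑ j ∈ Finset.range (n + 1), -(T j) := Finset.sum_congr rfl hterm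
      _ = -∑ j ∈ Finset.range (n + 1), T j := Finset.sum_neg_distrib T
      _ = -lagC f x n := rfl
  linear_combination key / 2

lemma lagC_even (f : ℂ → ℂ) (x : ℂ) (m : ℕ) : lagC f x (2 * m) = Lag f m x := by
  unfold lagC Lag
  apply Finset.sum_congr rfl
  intro j hj
  rw [Finset.mem_range] at hj
  have hj' : j ≤ 2 * m := by omega
  rw [pow_I_neg_I hj']
  have hI : Complex.I ^ (2 * m) = (-1 : ℂ) ^ m := by
    rw [pow_mul]; norm_num
  have hsgn : (-1 : ℂ) ^ (2 * m + j) = (-1 : ℂ) ^ j := by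
    rw [pow_add, pow_mul]; norm_num
  have hfac : (Nat.choose (2 * m) j : ℂ) * (Nat.factorial j) * (Nat.factorial (2 * m - j))
      = (Nat.factorial (2 * m)) := by
    rw [← Nat.cast_mul, ← Nat.cast_mul, Nat.choose_mul_factorial_mul_factorial hj']
  have h1 : (Nat.factorial j : ℂ) ≠ 0 := Nat.cast_ne_zero.mpr (Nat.factorial_ne_zero j)
  have h2 : (Nat.factorial (2 * m - j) : ℂ) ≠ 0 := Nat.cast_ne_zero.mpr (Nat.factorial_ne_zero _)
  have h3 : (Nat.factorial (2 * m) : ℂ) ≠ 0 := Nat.cast_ne_zero.mpr (Nat.factorial_ne_zero _)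
  rw [hI, hsgn]
  have hsgn2 : (-1 : ℂ) ^ (j + m) = (-1 : ℂ) ^ j * (-1 : ℂ) ^ m := by rw [pow_add]
  rw [hsgn2]
  field_simp
  linear_combination (-1:ℂ) * (iteratedDeriv j f x * iteratedDeriv (2*m-j) f x) * hfac

/-- Cauchy-product expansion: `f(x+it)·f(x−it) = ∑ₙ lagC n · tⁿ`. -/
lemma hasSum_lagC {f : ℂ → ℂ} (hent : Differentiable ℂ f) (x t : ℂ) :
    HasSum (fun n => lagC f x n * t ^ n)
      (f (x + Complex.I * t) * f (x - Complex.I * t)) := by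
  set a : ℕ → ℂ := fun n => ((n.factorial : ℂ))⁻¹ • (Complex.I * t) ^ n • iteratedDeriv n f x
    with ha'
  set b : ℕ → ℂ := fun n => ((n.factorial : ℂ))⁻¹ • (-(Complex.I * t)) ^ n • iteratedDeriv n f x
    with hb'
  have ha : HasSum a (f (x + Complex.I * t)) := by
    have := Complex.hasSum_taylorSeries_of_entire hent x (x + Complex.I * t)
    simpa [ha'] using this
  have hb : HasSum b (f (x - Complex.I * t)) := by
    have := Complex.hasSum_taylorSeries_of_entire hent x (x - Complex.I * t)
    have e : x - Complex.I * t - x = -(Complex.I * t) := by ring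
    rw [e] at this
    exact this
  have han : Summable fun n => ‖a n‖ := summable_norm_iff.mpr ha.summable
  have hbn : Summable fun n => ‖b n‖ := summable_norm_iff.mpr hb.summable
  have hprod := hasSum_sum_range_mul_of_summable_norm han hbn
  rw [ha.tsum_eq, hb.tsum_eq] at hprod
  have heq : (fun n => ∑ k ∈ Finset.range (n + 1), a k * b (n - k))
      = fun n => lagC f x n * t ^ n := by
    funext n
    rw [lagC, Finset.sum_mul]
    apply Finset.sum_congr rfl
    intro k hk
    rw [Finset.mem_range] at hk
    have hk' : k ≤ n := by omega
    have ht : t ^ k * t ^ (n - k) = t ^ n := by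
      rw [← pow_add, Nat.add_sub_cancel' hk']
    simp only [ha', hb', smul_eq_mul]
    have hneg : (-(Complex.I * t)) ^ (n - k) = (-Complex.I) ^ (n-k) * t ^ (n-k) := by
      rw [← neg_mul, mul_pow]
    rw [hneg, mul_pow]
    linear_combination (Complex.I ^ k * (-Complex.I) ^ (n-k) * ((k.factorial : ℂ))⁻¹ *
      (((n-k).factorial : ℂ))⁻¹ * iteratedDeriv k f x * iteratedDeriv (n-k) f x) * ht
  rwa [heq] at hprod

/-- **Remark 2.5 / sufficiency direction.** If `f` is a real entire function, not
identically zero, satisfying the generalized real Laguerre inequalities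
`Lₙ(x; f) ≥ 0` for every `n ∈ ℕ₀` and every `x ∈ ℝ`, then every zero of `f` in the
complex plane is real. -/
theorem laguerre_ineq_real_zeros (f : ℂ → ℂ)
    (hent : Differentiable ℂ f)
    (hreal : ∀ x : ℝ, (f x).im = 0)
    (hne : f ≠ 0)
    (hL : ∀ (n : ℕ) (x : ℝ), 0 ≤ Lag f n x) :
    ∀ z : ℂ, f z = 0 → z.im = 0 := by
  intro z hz
  by_contra him
  set x : ℂ := (z.re : ℂ) with hx
  have hyne : ((z.im : ℂ)) ≠ 0 := Complex.ofReal_ne_zero.mpr him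
  -- Step 1: the expansion at t = z.im sums to 0
  have h1 := hasSum_lagC hent x (z.im : ℂ)
  have hzz : x + Complex.I * (z.im : ℂ) = z := by
    rw [mul_comm]; exact Complex.re_add_im z
  rw [hzz, hz, zero_mul] at h1
  -- Step 2: the terms are nonnegative reals
  have hnn : ∀ n, ∃ r : ℝ, 0 ≤ r ∧ lagC f x n * (z.im : ℂ) ^ n = (r : ℂ) := by
    intro n
    rcases Nat.even_or_odd n with hev | hod
    · obtain ⟨m, hm⟩ := hev
      have hm2 : n = 2 * m := by omega
      have hLm := hL m z.re
      rw [Complex.le_def] at hLm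
      obtain ⟨hLre, hLim⟩ := hLm
      simp only [Complex.zero_re, Complex.zero_im] at hLre hLim
      refine ⟨(Lag f m x).re * z.im ^ n,
        mul_nonneg hLre (by rw [hm2, pow_mul]; exact pow_nonneg (sq_nonneg _) m), ?_⟩
      have hLag : Lag f m x = ((Lag f m x).re : ℂ) := by
        apply Complex.ext
        · simp
        · simp [hx, ← hLim]
      rw [hm2, lagC_even]
      rw [Complex.ofReal_mul, Complex.ofReal_pow, ← hLag]
    · exact ⟨0, le_refl 0, by rw [lagC_odd f x hod, zero_mul, Complex.ofReal_zero]⟩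
  choose r hr0 hr using hnn
  have h2 : HasSum (fun n => (r n : ℂ)) 0 := by
    simp only [← hr]; exact h1
  have h3 : HasSum r 0 := by
    rw [show (0:ℂ) = ((0:ℝ):ℂ) by norm_num] at h2
    exact Complex.hasSum_ofReal.mp h2
  have hr00 : ∀ n, r n = 0 := by
    intro n
    have hle : r n ≤ 0 := le_hasSum h3 n fun j _ => hr0 j
    exact le_antisymm hle (hr0 n)
  have hlag0 : ∀ n, lagC f x n = 0 := by
    intro n
    have := hr n
    rw [hr00 n, Complex.ofReal_zero] at this
    rcases mul_eq_zero.mp this with h | h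
    · exact h
    · exact absurd h (pow_ne_zero n hyne)
  -- Step 3: the product vanishes identically
  have hprod : ∀ t : ℂ, f (x + Complex.I * t) * f (x - Complex.I * t) = 0 := by
    intro t
    have h := hasSum_lagC hent x t
    simp only [hlag0, zero_mul] at h
    exact (hasSum_zero.unique h).symm
  have hall : ∀ u : ℂ, f u * f (2 * x - u) = 0 := by
    intro u
    have h := hprod (-Complex.I * (u - x))
    have key : Complex.I * (-Complex.I * (u - x)) = u - x := by
      rw [← mul_assoc, mul_neg, Complex.I_mul_I]; ring
    have e1 : x + Complex.I * (-Complex.I * (u - x)) = u := by rw [key]; ring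
    have e2 : x - Complex.I * (-Complex.I * (u - x)) = 2 * x - u := by rw [key]; ring
    rwa [e1, e2] at h
  -- Step 4: contradiction with f ≠ 0 via identity theorem
  obtain ⟨w, hw⟩ : ∃ w, f w ≠ 0 := by
    by_contra hno; push_neg at hno; exact hne (funext hno)
  have hopen : ∀ᶠ v in nhds w, f v ≠ 0 := hent.continuous.continuousAt.eventually_ne hw
  have htd : Filter.Tendsto (fun u : ℂ => 2 * x - u) (nhds (2 * x - w)) (nhds w) := by
    have h := Continuous.tendsto (by continuity : Continuous (fun u : ℂ => 2 * x - u)) (2 * x - w)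
    simpa [show 2 * x - (2 * x - w) = w by ring] using h
  have hnbhd : ∀ᶠ u in nhds (2 * x - w), f u = 0 := by
    filter_upwards [htd.eventually hopen] with u hu
    have h := hall (2 * x - u)
    have e : 2 * x - (2 * x - u) = u := by ring
    rw [e] at h
    exact (mul_eq_zero.mp h).resolve_left hu
  have hev : f =ᶠ[nhds (2 * x - w)] 0 := by
    filter_upwards [hnbhd] with u hu; simp [hu]
  have han : AnalyticOnNhd ℂ f Set.univ := Complex.analyticOnNhd_univ_iff_differentiable.mpr hent
  have := han.eqOn_zero_of_preconnected_of_eventuallyEq_zero isPreconnected_univ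
    (Set.mem_univ (2 * x - w)) hev
  exact hw (this (Set.mem_univ w))
end

section
/- Let f be a real entire function. Then for all x, y ∈ ℝ one has |f(x + iy)|² = f(x + iy)·f(x − iy) = ∑_{n=0}^{∞} Lₙ(x; f)·y^{2n}, the series converging for all real x and y. -/
lemma entire_iteratedDeriv {f : ℂ → ℂ} (hent : Differentiable ℂ f) (n : ℕ) :
    Differentiable ℂ (iteratedDeriv n f) :=
  (hent.contDiff (n := ⊤)).differentiable_iteratedDeriv n (by simp)

lemma im_iteratedDeriv_eq_zero (f : ℂ → ℂ) (hent : Differentiable ℂ f)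
    (hreal : ∀ x : ℝ, (f x).im = 0) (n : ℕ) : ∀ x : ℝ, (iteratedDeriv n f x).im = 0 := by
  induction n with
  | zero => simpa using hreal
  | succ n ih =>
    intro x
    have hg : HasDerivAt (fun t : ℝ => iteratedDeriv n f ↑t)
        (deriv (iteratedDeriv n f) ↑x) x :=
      ((entire_iteratedDeriv hent n _).hasDerivAt).comp_ofReal
    have him : HasDerivAt (fun t : ℝ => (iteratedDeriv n f ↑t).im)
        (Complex.imCLM (deriv (iteratedDeriv n f) ↑x)) x :=
      Complex.imCLM.hasFDerivAt.comp_hasDerivAt x hg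
    have h0 : HasDerivAt (fun t : ℝ => (iteratedDeriv n f ↑t).im) 0 x := by
      have he : (fun t : ℝ => (iteratedDeriv n f ↑t).im) = fun _ => (0 : ℝ) :=
        funext fun t => ih t
      rw [he]; exact hasDerivAt_const x 0
    have h := him.unique h0
    rw [iteratedDeriv_succ]
    simpa using h

lemma summable_norm_taylor {f : ℂ → ℂ} (hent : Differentiable ℂ f) (x : ℝ) (w : ℂ) :
    Summable (fun k => ‖(Nat.factorial k : ℂ)⁻¹ * iteratedDeriv k f (x : ℂ) * w ^ k‖) := by
  set R : ℝ := ‖w‖ + 1 with hRdef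
  have hR0 : (0 : ℝ) < R := by positivity
  have h3 := Complex.hasSum_taylorSeries_of_entire hent (x : ℂ) ((x : ℂ) + R)
  have hterm : ∀ k : ℕ,
      ‖(Nat.factorial k : ℂ)⁻¹ • (((x : ℂ) + R) - x) ^ k • iteratedDeriv k f (x : ℂ)‖
      = ‖(Nat.factorial k : ℂ)⁻¹ * iteratedDeriv k f (x : ℂ)‖ * R ^ k := by
    intro k
    rw [add_sub_cancel_left, smul_eq_mul, smul_eq_mul, norm_mul, norm_mul, norm_pow,
      Complex.norm_real, Real.norm_eq_abs, abs_of_pos hR0, norm_mul]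
    ring
  have ht : Filter.Tendsto
      (fun k : ℕ => ‖(Nat.factorial k : ℂ)⁻¹ * iteratedDeriv k f (x : ℂ)‖ * R ^ k)
      Filter.atTop (nhds 0) := by
    have h := h3.summable.tendsto_atTop_zero.norm
    rw [norm_zero] at h
    simpa only [hterm] using h
  obtain ⟨C, hC⟩ := ht.bddAbove_range
  have hCk : ∀ k : ℕ, ‖(Nat.factorial k : ℂ)⁻¹ * iteratedDeriv k f (x : ℂ)‖ * R ^ k ≤ C :=
    fun k => hC (Set.mem_range_self k)
  have hr1 : ‖w‖ / R < 1 := by rw [div_lt_one hR0]; simp [hRdef]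
  have hr0 : 0 ≤ ‖w‖ / R := by positivity
  refine Summable.of_nonneg_of_le (fun k => norm_nonneg _) (fun k => ?_)
    ((summable_geometric_of_lt_one hr0 hr1).mul_left C)
  rw [norm_mul, norm_pow]
  calc ‖(Nat.factorial k : ℂ)⁻¹ * iteratedDeriv k f (x : ℂ)‖ * ‖w‖ ^ k
      = (‖(Nat.factorial k : ℂ)⁻¹ * iteratedDeriv k f (x : ℂ)‖ * R ^ k) * (‖w‖ / R) ^ k := by
        rw [mul_assoc, ← mul_pow]
        congr 2
        field_simp
    _ ≤ C * (‖w‖ / R) ^ k := mul_le_mul_of_nonneg_right (hCk k) (by positivity)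

lemma neg_one_pow_sub_eq {k m : ℕ} (hk : k ≤ m) :
    (-1 : ℂ) ^ (m - k) = (-1 : ℂ) ^ m * (-1 : ℂ) ^ k := by
  have h1 : (-1 : ℂ) ^ (m - k) * (-1 : ℂ) ^ k = (-1 : ℂ) ^ m := by
    rw [← pow_add, Nat.sub_add_cancel hk]
  have h2 : (-1 : ℂ) ^ k * (-1 : ℂ) ^ k = 1 := by
    rw [← pow_add]; exact Even.neg_one_pow ⟨k, rfl⟩
  calc (-1 : ℂ) ^ (m - k) = (-1 : ℂ) ^ (m - k) * ((-1 : ℂ) ^ k * (-1 : ℂ) ^ k) := by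
        rw [h2, mul_one]
    _ = ((-1 : ℂ) ^ (m - k) * (-1 : ℂ) ^ k) * (-1 : ℂ) ^ k := by ring
    _ = (-1 : ℂ) ^ m * (-1 : ℂ) ^ k := by rw [h1]

lemma cauchy_term (F : ℕ → ℂ) (y : ℝ) (m : ℕ) :
    (∑ k ∈ Finset.range (m + 1),
      ((Nat.factorial k : ℂ)⁻¹ * F k * ((y : ℂ) * Complex.I) ^ k) *
      ((Nat.factorial (m - k) : ℂ)⁻¹ * F (m - k) * (-((y : ℂ) * Complex.I)) ^ (m - k)))
    = Complex.I ^ m * (y : ℂ) ^ m *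
      ∑ k ∈ Finset.range (m + 1), (-1 : ℂ) ^ (m - k) * ((Nat.factorial k : ℂ)⁻¹ * F k) *
        ((Nat.factorial (m - k) : ℂ)⁻¹ * F (m - k)) := by
  rw [Finset.mul_sum]
  apply Finset.sum_congr rfl
  intro k hk
  have hk' : k ≤ m := Nat.lt_succ_iff.mp (Finset.mem_range.mp hk)
  have hneg : (-((y : ℂ) * Complex.I)) ^ (m - k)
      = (-1 : ℂ) ^ (m - k) * ((y : ℂ) * Complex.I) ^ (m - k) := by rw [neg_pow]
  have hpow : ((y : ℂ) * Complex.I) ^ k * ((y : ℂ) * Complex.I) ^ (m - k)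
      = (y : ℂ) ^ m * Complex.I ^ m := by
    rw [← pow_add, Nat.add_sub_cancel' hk', mul_pow]
  calc ((Nat.factorial k : ℂ)⁻¹ * F k * ((y : ℂ) * Complex.I) ^ k) *
      ((Nat.factorial (m - k) : ℂ)⁻¹ * F (m - k) * (-((y : ℂ) * Complex.I)) ^ (m - k))
      = (((y : ℂ) * Complex.I) ^ k * ((y : ℂ) * Complex.I) ^ (m - k)) *
        ((-1 : ℂ) ^ (m - k) * ((Nat.factorial k : ℂ)⁻¹ * F k) *
          ((Nat.factorial (m - k) : ℂ)⁻¹ * F (m - k))) := by rw [hneg]; ring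
    _ = _ := by rw [hpow]; ring

lemma sum_odd_zero (A : ℕ → ℂ) {m : ℕ} (hm : Odd m) :
    ∑ k ∈ Finset.range (m + 1), (-1 : ℂ) ^ (m - k) * A k * A (m - k) = 0 := by
  have h := Finset.sum_range_reflect (fun k => (-1 : ℂ) ^ (m - k) * A k * A (m - k)) (m + 1)
  simp only [Nat.add_sub_cancel] at h
  have h2 : ∀ j ∈ Finset.range (m + 1),
      (-1 : ℂ) ^ (m - (m - j)) * A (m - j) * A (m - (m - j))
        = -((-1 : ℂ) ^ (m - j) * A j * A (m - j)) := by
    intro j hj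
    have hj' : j ≤ m := Nat.lt_succ_iff.mp (Finset.mem_range.mp hj)
    rw [Nat.sub_sub_self hj']
    have : (-1 : ℂ) ^ j = -(-1 : ℂ) ^ (m - j) := by
      rw [neg_one_pow_sub_eq hj', hm.neg_one_pow]
      ring
    rw [this]; ring
  rw [Finset.sum_congr rfl h2, Finset.sum_neg_distrib] at h
  have h3 : (2 : ℂ) * ∑ k ∈ Finset.range (m + 1), (-1 : ℂ) ^ (m - k) * A k * A (m - k) = 0 := by
    linear_combination -h
  have := mul_eq_zero.mp h3
  simpa using this

lemma even_sum (f : ℂ → ℂ) (x : ℂ) (n : ℕ) :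
    (-1 : ℂ) ^ n * ∑ k ∈ Finset.range (2 * n + 1),
      (-1 : ℂ) ^ (2 * n - k) * ((Nat.factorial k : ℂ)⁻¹ * iteratedDeriv k f x) *
        ((Nat.factorial (2 * n - k) : ℂ)⁻¹ * iteratedDeriv (2 * n - k) f x)
    = Lag f n x := by
  rw [Lag, Finset.mul_sum]
  apply Finset.sum_congr rfl
  intro k hk
  have hk' : k ≤ 2 * n := Nat.lt_succ_iff.mp (Finset.mem_range.mp hk)
  have h1 : (-1 : ℂ) ^ (2 * n - k) = (-1 : ℂ) ^ k := by
    rw [neg_one_pow_sub_eq hk', Even.neg_one_pow ⟨n, two_mul n⟩, one_mul]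
  rw [h1, Nat.cast_choose ℂ hk']
  have hf1 : (Nat.factorial k : ℂ) ≠ 0 := Nat.cast_ne_zero.mpr (Nat.factorial_ne_zero k)
  have hf2 : (Nat.factorial (2 * n - k) : ℂ) ≠ 0 :=
    Nat.cast_ne_zero.mpr (Nat.factorial_ne_zero _)
  have hf3 : (Nat.factorial (2 * n) : ℂ) ≠ 0 :=
    Nat.cast_ne_zero.mpr (Nat.factorial_ne_zero _)
  field_simp
  ring

/-- **Formula (2.11).** For a real entire function `f` and all real `x, y`:
`|f(x + iy)|² = f(x + iy)·f(x − iy) = ∑_{n=0}^∞ Lₙ(x; f)·y^{2n}`,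
the series converging for all real `x` and `y`. -/
theorem abs_sq_eq_sum_laguerre (f : ℂ → ℂ)
    (hent : Differentiable ℂ f)
    (hreal : ∀ x : ℝ, (f x).im = 0) :
    ∀ x y : ℝ,
      (((‖f ((x : ℂ) + (y : ℂ) * Complex.I)‖ : ℝ) : ℂ)) ^ 2 =
          f ((x : ℂ) + (y : ℂ) * Complex.I) * f ((x : ℂ) - (y : ℂ) * Complex.I) ∧
      HasSum (fun n : ℕ => Lag f n (x : ℂ) * (y : ℂ) ^ (2 * n))
        (f ((x : ℂ) + (y : ℂ) * Complex.I) * f ((x : ℂ) - (y : ℂ) * Complex.I)) := by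
  intro x y
  have him := im_iteratedDeriv_eq_zero f hent hreal
  -- Taylor expansions
  have h1 : HasSum
      (fun k : ℕ => (Nat.factorial k : ℂ)⁻¹ * iteratedDeriv k f (x : ℂ) *
        ((y : ℂ) * Complex.I) ^ k)
      (f ((x : ℂ) + (y : ℂ) * Complex.I)) := by
    have h := Complex.hasSum_taylorSeries_of_entire hent (x : ℂ)
      ((x : ℂ) + (y : ℂ) * Complex.I)
    simp only [add_sub_cancel_left, smul_eq_mul] at h
    have he : (fun k : ℕ => (Nat.factorial k : ℂ)⁻¹ *
        (((y : ℂ) * Complex.I) ^ k * iteratedDeriv k f (x : ℂ)))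
        = fun k : ℕ => (Nat.factorial k : ℂ)⁻¹ * iteratedDeriv k f (x : ℂ) *
            ((y : ℂ) * Complex.I) ^ k := by
      funext k; ring
    rwa [he] at h
  have h2 : HasSum
      (fun k : ℕ => (Nat.factorial k : ℂ)⁻¹ * iteratedDeriv k f (x : ℂ) *
        (-((y : ℂ) * Complex.I)) ^ k)
      (f ((x : ℂ) - (y : ℂ) * Complex.I)) := by
    have h := Complex.hasSum_taylorSeries_of_entire hent (x : ℂ)
      ((x : ℂ) - (y : ℂ) * Complex.I)
    simp only [sub_sub_cancel_left, smul_eq_mul] at h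
    have he : (fun k : ℕ => (Nat.factorial k : ℂ)⁻¹ *
        ((-((y : ℂ) * Complex.I)) ^ k * iteratedDeriv k f (x : ℂ)))
        = fun k : ℕ => (Nat.factorial k : ℂ)⁻¹ * iteratedDeriv k f (x : ℂ) *
            (-((y : ℂ) * Complex.I)) ^ k := by
      funext k; ring
    rwa [he] at h
  -- conjugation identity
  have hconj : f ((x : ℂ) - (y : ℂ) * Complex.I)
      = (starRingEnd ℂ) (f ((x : ℂ) + (y : ℂ) * Complex.I)) := by
    have hc : HasSum
        (fun k : ℕ => (starRingEnd ℂ) ((Nat.factorial k : ℂ)⁻¹ * iteratedDeriv k f (x : ℂ) *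
          ((y : ℂ) * Complex.I) ^ k))
        ((starRingEnd ℂ) (f ((x : ℂ) + (y : ℂ) * Complex.I))) :=
      h1.map (starRingEnd ℂ) Complex.continuous_conj
    have he : (fun k : ℕ => (starRingEnd ℂ) ((Nat.factorial k : ℂ)⁻¹ *
        iteratedDeriv k f (x : ℂ) * ((y : ℂ) * Complex.I) ^ k))
        = fun k : ℕ => (Nat.factorial k : ℂ)⁻¹ * iteratedDeriv k f (x : ℂ) *
            (-((y : ℂ) * Complex.I)) ^ k := by
      funext k
      rw [map_mul, map_mul, map_pow, map_inv₀, map_natCast, map_mul,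
        Complex.conj_ofReal, Complex.conj_I,
        Complex.conj_eq_iff_im.mpr (him k x)]
      ring
    rw [he] at hc
    exact h2.unique hc
  constructor
  · rw [hconj, Complex.mul_conj]
    norm_cast
    exact Complex.sq_norm _
  · -- Cauchy product
    have hu := summable_norm_taylor hent x ((y : ℂ) * Complex.I)
    have hv := summable_norm_taylor hent x (-((y : ℂ) * Complex.I))
    have hprod := hasSum_sum_range_mul_of_summable_norm hu hv
    rw [h1.tsum_eq, h2.tsum_eq] at hprod
    -- rewrite the Cauchy terms
    have hterm : ∀ m : ℕ, (∑ k ∈ Finset.range (m + 1),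
        ((Nat.factorial k : ℂ)⁻¹ * iteratedDeriv k f (x : ℂ) * ((y : ℂ) * Complex.I) ^ k) *
        ((Nat.factorial (m - k) : ℂ)⁻¹ * iteratedDeriv (m - k) f (x : ℂ) *
          (-((y : ℂ) * Complex.I)) ^ (m - k)))
        = Complex.I ^ m * (y : ℂ) ^ m *
          ∑ k ∈ Finset.range (m + 1), (-1 : ℂ) ^ (m - k) *
            ((Nat.factorial k : ℂ)⁻¹ * iteratedDeriv k f (x : ℂ)) *
            ((Nat.factorial (m - k) : ℂ)⁻¹ * iteratedDeriv (m - k) f (x : ℂ)) :=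
      fun m => cauchy_term (fun k => iteratedDeriv k f (x : ℂ)) y m
    have hodd : ∀ m : ℕ, Odd m → (∑ k ∈ Finset.range (m + 1),
        ((Nat.factorial k : ℂ)⁻¹ * iteratedDeriv k f (x : ℂ) * ((y : ℂ) * Complex.I) ^ k) *
        ((Nat.factorial (m - k) : ℂ)⁻¹ * iteratedDeriv (m - k) f (x : ℂ) *
          (-((y : ℂ) * Complex.I)) ^ (m - k))) = 0 := by
      intro m hm
      rw [hterm m, sum_odd_zero (fun k => (Nat.factorial k : ℂ)⁻¹ * iteratedDeriv k f (x : ℂ)) hm,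
        mul_zero]
    have heven : ∀ n : ℕ, (∑ k ∈ Finset.range (2 * n + 1),
        ((Nat.factorial k : ℂ)⁻¹ * iteratedDeriv k f (x : ℂ) * ((y : ℂ) * Complex.I) ^ k) *
        ((Nat.factorial (2 * n - k) : ℂ)⁻¹ * iteratedDeriv (2 * n - k) f (x : ℂ) *
          (-((y : ℂ) * Complex.I)) ^ (2 * n - k)))
        = Lag f n (x : ℂ) * (y : ℂ) ^ (2 * n) := by
      intro n
      rw [hterm (2 * n)]
      rw [← even_sum f (x : ℂ) n]
      have hI : Complex.I ^ (2 * n) = (-1 : ℂ) ^ n := by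
        rw [pow_mul, Complex.I_sq]
      rw [hI]
      ring
    have hinj : Function.Injective (fun n : ℕ => 2 * n) := fun a b h => by
      simpa using h
    have hsupp : ∀ m ∉ Set.range (fun n : ℕ => 2 * n), (∑ k ∈ Finset.range (m + 1),
        ((Nat.factorial k : ℂ)⁻¹ * iteratedDeriv k f (x : ℂ) * ((y : ℂ) * Complex.I) ^ k) *
        ((Nat.factorial (m - k) : ℂ)⁻¹ * iteratedDeriv (m - k) f (x : ℂ) *
          (-((y : ℂ) * Complex.I)) ^ (m - k))) = 0 := by
      intro m hm
      apply hodd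
      rcases Nat.even_or_odd m with he | ho
      · obtain ⟨r, rfl⟩ := he
        exact absurd ⟨r, two_mul r⟩ hm
      · exact ho
    have h5 := (hinj.hasSum_iff hsupp).mpr hprod
    have heq : ((fun m : ℕ => ∑ k ∈ Finset.range (m + 1),
        ((Nat.factorial k : ℂ)⁻¹ * iteratedDeriv k f (x : ℂ) * ((y : ℂ) * Complex.I) ^ k) *
        ((Nat.factorial (m - k) : ℂ)⁻¹ * iteratedDeriv (m - k) f (x : ℂ) *
          (-((y : ℂ) * Complex.I)) ^ (m - k))) ∘ (fun n : ℕ => 2 * n))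
        = fun n : ℕ => Lag f n (x : ℂ) * (y : ℂ) ^ (2 * n) := by
      funext n
      exact heven n
    rwa [heq] at h5
end

section
/- Let Ḡ : [0, ∞) → ℝ be continuous, strictly decreasing, positive on (0, ∞), integrable on (0, ∞), with Ḡ(s) → 0 as s → ∞. Then for every x > 0, the integral I(x) := ∫_{0}^{∞} Ḡ(t)·sin(xt) dt satisfies I(x) > 0. -/
open MeasureTheory Set intervalIntegral

/-- **Remark 3.11 (Pólya's argument).** Let `Ḡ : [0, ∞) → ℝ` be continuous, strictly
decreasing, positive on `(0, ∞)`, integrable on `(0, ∞)`, with `Ḡ(s) → 0` as `s → ∞`.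
Then for every `x > 0` the Fourier sine transform `I(x) := ∫₀^∞ Ḡ(t)·sin(xt) dt` is
positive. -/
theorem sine_transform_pos (G : ℝ → ℝ)
    (hcont : ContinuousOn G (Set.Ici 0))
    (hanti : StrictAntiOn G (Set.Ici 0))
    (hpos : ∀ s : ℝ, 0 < s → 0 < G s)
    (hint : MeasureTheory.IntegrableOn G (Set.Ioi 0))
    (hlim : Filter.Tendsto G Filter.atTop (nhds 0)) :
    ∀ x : ℝ, 0 < x → 0 < ∫ t in Set.Ioi (0 : ℝ), G t * Real.sin (x * t) := by
  intro x hx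
  set P : ℝ := Real.pi / x with hPdef
  have hP : 0 < P := div_pos Real.pi_pos hx
  have hxP : x * P = Real.pi := by
    rw [hPdef]; field_simp
  set f : ℝ → ℝ := fun t => G t * Real.sin (x * t) with hfdef
  have hfcont : ContinuousOn f (Set.Ici 0) :=
    hcont.mul ((Real.continuous_sin.comp (continuous_const.mul continuous_id)).continuousOn)
  -- interval integrability of f on subintervals of [0, ∞)
  have hfInt : ∀ a b : ℝ, 0 ≤ a → a ≤ b → IntervalIntegrable f volume a b := by
    intro a b ha hab
    exact (hfcont.mono (Set.Icc_subset_Ici_iff hab |>.mpr ha)).intervalIntegrable_of_Icc hab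
  -- integrability of f on Ioi 0
  have hfint : IntegrableOn f (Set.Ioi 0) := by
    refine MeasureTheory.Integrable.mono hint ?_ ?_
    · exact hint.aestronglyMeasurable.mul
        ((Real.continuous_sin.comp (continuous_const.mul continuous_id)).aestronglyMeasurable)
    · refine Filter.Eventually.of_forall fun t => ?_
      have : |Real.sin (x * t)| ≤ 1 := Real.abs_sin_le_one _
      calc ‖G t * Real.sin (x * t)‖ = |G t| * |Real.sin (x * t)| := abs_mul _ _
        _ ≤ |G t| * 1 := by gcongr
        _ = ‖G t‖ := by simp
  -- the decomposition of Ioi 0 into periods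
  set s : ℕ → Set ℝ := fun k => Set.Ioc (k * (2 * P)) ((k + 1) * (2 * P)) with hsdef
  have hsm : ∀ k, MeasurableSet (s k) := fun k => measurableSet_Ioc
  have hsd0 : ∀ i j : ℕ, i < j → Disjoint (s i) (s j) := by
    intro i j h
    rw [hsdef]
    simp only [Set.Ioc_disjoint_Ioc]
    have h1 : (i:ℝ) + 1 ≤ j := by exact_mod_cast h
    have hP2 : (0:ℝ) < 2*P := by linarith
    calc min (((i:ℝ)+1)*(2*P)) (((j:ℝ)+1)*(2*P)) ≤ ((i:ℝ)+1)*(2*P) := min_le_left _ _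
      _ ≤ (j:ℝ)*(2*P) := by nlinarith
      _ ≤ max ((i:ℝ)*(2*P)) ((j:ℝ)*(2*P)) := le_max_right _ _
  have hsd : Pairwise (Function.onFun Disjoint s) := by
    intro i j hij
    rcases hij.lt_or_gt with h | h
    · exact hsd0 i j h
    · exact (hsd0 j i h).symm
  have hsu : (⋃ k, s k) = Set.Ioi 0 := by
    ext t
    simp only [Set.mem_iUnion, hsdef, Set.mem_Ioc, Set.mem_Ioi]
    constructor
    · rintro ⟨k, hk1, hk2⟩
      have : (0:ℝ) ≤ k * (2 * P) := by positivity
      linarith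
    · intro ht
      have hc : 0 < 2 * P := by linarith
      set y : ℝ := t / (2 * P) with hy
      have hy0 : 0 < y := div_pos ht hc
      refine ⟨⌈y⌉₊ - 1, ?_, ?_⟩
      · have h1 : 1 ≤ ⌈y⌉₊ := Nat.one_le_ceil_iff.mpr hy0
        have h2 : ((⌈y⌉₊ - 1 : ℕ) : ℝ) = (⌈y⌉₊ : ℝ) - 1 := by
          push_cast [h1]; ring
        have h3 : (⌈y⌉₊ : ℝ) < y + 1 := Nat.ceil_lt_add_one hy0.le
        rw [h2]
        have : ((⌈y⌉₊ : ℝ) - 1) < y := by linarith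
        calc ((⌈y⌉₊ : ℝ) - 1) * (2 * P) < y * (2 * P) := by
              exact mul_lt_mul_of_pos_right this hc
          _ = t := by rw [hy]; field_simp
      · have h1 : 1 ≤ ⌈y⌉₊ := Nat.one_le_ceil_iff.mpr hy0
        have h2 : ((⌈y⌉₊ - 1 : ℕ) : ℝ) + 1 = (⌈y⌉₊ : ℝ) := by
          push_cast [h1]; ring
        rw [h2]
        have h3 : y ≤ (⌈y⌉₊ : ℝ) := Nat.le_ceil y
        calc t = y * (2 * P) := by rw [hy]; field_simp
          _ ≤ (⌈y⌉₊ : ℝ) * (2 * P) := by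
              exact mul_le_mul_of_nonneg_right h3 hc.le
  have hSum : HasSum (fun k => ∫ t in s k, f t) (∫ t in Set.Ioi (0:ℝ), f t) := by
    have := MeasureTheory.hasSum_integral_iUnion hsm hsd (hsu ▸ hfint)
    rwa [hsu] at this
  -- rewrite each term as an interval integral of the folded function
  have hterm : ∀ k : ℕ, (∫ t in s k, f t)
      = ∫ t in (k * (2*P))..(k * (2*P) + P), (G t - G (t + P)) * Real.sin (x * t) := by
    intro k
    set a : ℝ := k * (2 * P) with hadef
    have ha0 : 0 ≤ a := by positivity
    have hab : a ≤ a + 2 * P := by linarith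
    have h1 : (∫ t in s k, f t) = ∫ t in a..(a + 2*P), f t := by
      rw [intervalIntegral.integral_of_le hab]
      congr 1
      rw [hsdef]
      congr 1
      simp only [hadef]
      congr 1 <;> ring
    rw [h1]
    have hsplit : (∫ t in a..(a + 2*P), f t)
        = (∫ t in a..(a+P), f t) + ∫ t in (a+P)..(a+2*P), f t := by
      rw [intervalIntegral.integral_add_adjacent_intervals
        (hfInt a (a+P) ha0 (by linarith)) (hfInt (a+P) (a+2*P) (by linarith) (by linarith))]
    have hshift : (∫ t in (a+P)..(a+2*P), f t) = ∫ t in a..(a+P), f (t + P) := by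
      rw [intervalIntegral.integral_comp_add_right (fun t => f t) P]
      congr 1
      ring
    have hneg : ∀ t : ℝ, f (t + P) = -(G (t + P) * Real.sin (x * t)) := by
      intro t
      have : x * (t + P) = x * t + Real.pi := by rw [mul_add, hxP]
      simp only [hfdef, this, Real.sin_add_pi]
      ring
    rw [hsplit, hshift]
    rw [intervalIntegral.integral_congr (g := fun t => -(G (t + P) * Real.sin (x * t)))
      (fun t _ => hneg t)]
    rw [intervalIntegral.integral_neg]
    have hgInt : IntervalIntegrable (fun t => G (t + P) * Real.sin (x * t)) volume a (a+P) := by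
      have hc2 : ContinuousOn (fun t => G (t + P) * Real.sin (x * t)) (Set.Icc a (a+P)) := by
        apply ContinuousOn.mul
        · apply hcont.comp ((continuous_id.add continuous_const).continuousOn)
          intro t ht
          simp only [Set.mem_Icc] at ht
          have : 0 ≤ t := le_trans ha0 ht.1
          simp only [id_eq, Set.mem_Ici, Pi.add_apply]
          linarith
        · exact (Real.continuous_sin.comp (continuous_const.mul continuous_id)).continuousOn
      exact hc2.intervalIntegrable_of_Icc (by linarith)
    have hsub : (∫ t in a..(a+P), (G t - G (t + P)) * Real.sin (x * t))
        = (∫ t in a..(a+P), f t) - ∫ t in a..(a+P), G (t + P) * Real.sin (x * t) := by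
      rw [← intervalIntegral.integral_sub (hfInt a (a+P) ha0 (by linarith)) hgInt]
      apply intervalIntegral.integral_congr
      intro t _
      simp only [hfdef]
      ring
    rw [hsub]
    ring
  -- sin (x t) is nonneg on each [a, a+P]
  have hsin : ∀ (k : ℕ) (t : ℝ), k * (2*P) ≤ t → t ≤ k * (2*P) + P →
      0 ≤ Real.sin (x * t) := by
    intro k t h1 h2
    have key : Real.sin (x * t) = Real.sin (x * t - k * (2 * Real.pi)) := by
      have := Real.sin_add_int_mul_two_pi (x * t - k * (2 * Real.pi)) (k : ℤ)
      push_cast at this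
      rw [← this]
      congr 1
      ring
    rw [key]
    apply Real.sin_nonneg_of_nonneg_of_le_pi
    · have : k * (2 * Real.pi) = x * (k * (2 * P)) := by
        rw [show x * (k * (2*P)) = (k:ℝ) * (2 * (x * P)) by ring, hxP]
      rw [this]
      have := mul_le_mul_of_nonneg_left h1 hx.le
      linarith
    · have h3 : x * t ≤ x * (k * (2*P) + P) := mul_le_mul_of_nonneg_left h2 hx.le
      have h4 : x * (k * (2*P) + P) = k * (2 * Real.pi) + Real.pi := by
        rw [show x * (k * (2*P) + P) = (k:ℝ) * (2 * (x*P)) + x * P by ring, hxP]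
      linarith
  -- each term is nonneg
  have hnonneg : ∀ k : ℕ, 0 ≤ ∫ t in s k, f t := by
    intro k
    rw [hterm k]
    apply intervalIntegral.integral_nonneg (by linarith)
    intro t ht
    simp only [Set.mem_Icc] at ht
    have ht0 : (0:ℝ) ≤ t := le_trans (by positivity) ht.1
    apply mul_nonneg
    · have := hanti (Set.mem_Ici.mpr ht0) (Set.mem_Ici.mpr (by linarith : (0:ℝ) ≤ t + P))
        (by linarith : t < t + P)
      linarith
    · exact hsin k t ht.1 ht.2
  -- the first term is positive
  have hpos0 : 0 < ∫ t in s 0, f t := by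
    rw [hterm 0]
    simp only [Nat.cast_zero, zero_mul, zero_add]
    apply intervalIntegral.intervalIntegral_pos_of_pos_on
    · have hc2 : ContinuousOn (fun t => (G t - G (t + P)) * Real.sin (x * t))
          (Set.Icc (0:ℝ) P) := by
        apply ContinuousOn.mul
        · apply ContinuousOn.sub
          · exact hcont.mono (by intro t ht; exact le_trans (le_refl _) ht.1)
          · apply hcont.comp ((continuous_id.add continuous_const).continuousOn)
            intro t ht
            simp only [Set.mem_Icc] at ht
            simp only [id_eq, Set.mem_Ici, Pi.add_apply]
            linarith [ht.1]
        · exact (Real.continuous_sin.comp (continuous_const.mul continuous_id)).continuousOn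
      exact hc2.intervalIntegrable_of_Icc hP.le
    · intro t ht
      simp only [Set.mem_Ioo] at ht
      apply mul_pos
      · have := hanti (Set.mem_Ici.mpr ht.1.le) (Set.mem_Ici.mpr (by linarith : (0:ℝ) ≤ t + P))
          (by linarith : t < t + P)
        linarith
      · apply Real.sin_pos_of_pos_of_lt_pi
        · exact mul_pos hx ht.1
        · calc x * t < x * P := mul_lt_mul_of_pos_left ht.2 hx
            _ = Real.pi := hxP
    · exact hP
  have := Summable.tsum_pos hSum.summable hnonneg 0 hpos0
  rwa [hSum.tsum_eq] at this
end

section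
/- Write Φ(t) = ∑_{n=1}^{∞} aₙ(t) with aₙ(t) := π n² (2π n² e^{4t} − 3)·exp(5t − π n² e^{4t}). Then: (i) for each n ≥ 1, aₙ(t) > 0 for all t ≥ 0, and hence Φ(t) > 0 for all t ≥ 0; (ii) Φ is an even function on ℝ, i.e. Φ(−t) = Φ(t) for all t ∈ ℝ; and (iii) Φ′(t) < 0 for all t > 0. -/
/-- The `n`-th summand of the Jacobi theta kernel:
`aₙ(t) := π n² (2π n² e^{4t} − 3)·exp(5t − π n² e^{4t})`. -/
noncomputable def jacobiA (n : ℕ) (t : ℝ) : ℝ :=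
  Real.pi * (n : ℝ) ^ 2 * (2 * Real.pi * (n : ℝ) ^ 2 * Real.exp (4 * t) - 3) *
    Real.exp (5 * t - Real.pi * (n : ℝ) ^ 2 * Real.exp (4 * t))

/-- The Jacobi theta kernel `Φ(t) := ∑_{n=1}^∞ aₙ(t)`. -/
noncomputable def jacobiPhi (t : ℝ) : ℝ := ∑' n : ℕ, jacobiA (n + 1) t

open Real Set

noncomputable def uu (n : ℕ) (t : ℝ) : ℝ := Real.pi * (n : ℝ) ^ 2 * Real.exp (4 * t)

noncomputable def gen (K : ℕ → ℝ) (c p q r s : ℝ) (n : ℕ) (t : ℝ) : ℝ :=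
  K n * (p * uu n t ^ 3 + q * uu n t ^ 2 + r * uu n t + s) * Real.exp (c * t - uu n t)

lemma uu_nonneg (n : ℕ) (t : ℝ) : 0 ≤ uu n t :=
  mul_nonneg (mul_nonneg Real.pi_pos.le (sq_nonneg _)) (Real.exp_pos _).le

lemma hasDerivAt_uu (n : ℕ) (t : ℝ) : HasDerivAt (uu n) (4 * uu n t) t := by
  have h : HasDerivAt (fun t : ℝ => 4 * t) 4 t := by
    simpa using (hasDerivAt_id t).const_mul (4 : ℝ)
  have := (h.exp).const_mul (Real.pi * (n : ℝ) ^ 2)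
  refine this.congr_deriv ?_
  unfold uu; ring

lemma hasDerivAt_gen (K : ℕ → ℝ) (c q r s : ℝ) (n : ℕ) (t : ℝ) :
    HasDerivAt (gen K c 0 q r s n)
      (gen K c (-4*q) (c*q + 8*q - 4*r) (c*r + 4*r - 4*s) (c*s) n t) t := by
  have hu := hasDerivAt_uu n t
  have funeq : gen K c 0 q r s n
      = fun t => K n * ((q * uu n t ^ 2 + r * uu n t + s) * Real.exp (c * t - uu n t)) := by
    funext t; simp only [gen]; ring
  rw [funeq]
  have h2 : HasDerivAt (fun t => uu n t ^ 2) (2 * uu n t * (4 * uu n t)) t := by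
    exact ((hasDerivAt_pow 2 (uu n t)).comp t hu).congr_deriv (by norm_num)
  have hpoly : HasDerivAt (fun t => q * uu n t ^ 2 + r * uu n t + s)
      (q * (2 * uu n t * (4 * uu n t)) + r * (4 * uu n t)) t :=
    ((h2.const_mul q).add (hu.const_mul r)).add_const s
  have hexp : HasDerivAt (fun t => Real.exp (c * t - uu n t))
      (Real.exp (c * t - uu n t) * (c - 4 * uu n t)) t := by
    have hc : HasDerivAt (fun t : ℝ => c * t) c t := by
      simpa using (hasDerivAt_id t).const_mul c
    exact (hc.sub hu).exp
  have := (hpoly.mul hexp).const_mul (K n)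
  refine this.congr_deriv ?_
  simp only [gen]
  ring

lemma nat_le_sq (n : ℕ) : (n : ℝ) ≤ (n : ℝ) ^ 2 := by
  have : n ≤ n ^ 2 := Nat.le_self_pow two_ne_zero n
  exact_mod_cast this


lemma pow3_bounds {x : ℝ} (hx : 0 ≤ x) :
    x ≤ (1+x)^3 ∧ x^2 ≤ (1+x)^3 ∧ x^3 ≤ (1+x)^3 ∧ 1 ≤ (1+x)^3 := by
  have c1 : 0 ≤ x * x := mul_nonneg hx hx
  have c2 : 0 ≤ x * x * x := mul_nonneg c1 hx
  refine ⟨by nlinarith [c1, c2], by nlinarith [c1, c2], by nlinarith [c1, c2],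
    by nlinarith [c1, c2]⟩

lemma poly_abs_bound (p q r s : ℝ) {u : ℝ} (hu0 : 0 ≤ u) :
    |p * u ^ 3 + q * u ^ 2 + r * u + s| ≤ (|p| + |q| + |r| + |s|) * (1+u)^3 := by
  obtain ⟨b1, b2, b3, b4⟩ := pow3_bounds hu0
  calc |p * u ^ 3 + q * u ^ 2 + r * u + s|
      ≤ |p| * u^3 + |q| * u^2 + |r| * u + |s| := by
        have h1 := abs_add_le (p * u ^ 3 + q * u ^ 2 + r * u) s
        have h2 := abs_add_le (p * u ^ 3 + q * u ^ 2) (r * u)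
        have h3 := abs_add_le (p * u ^ 3) (q * u ^ 2)
        have e1 : |p * u ^ 3| = |p| * u ^ 3 := by
          rw [abs_mul, abs_pow, abs_of_nonneg hu0]
        have e2 : |q * u ^ 2| = |q| * u ^ 2 := by
          rw [abs_mul, abs_pow, abs_of_nonneg hu0]
        have e3 : |r * u| = |r| * u := by rw [abs_mul, abs_of_nonneg hu0]
        linarith
    _ ≤ (|p| + |q| + |r| + |s|) * (1+u)^3 := by
        have hp := abs_nonneg p; have hq := abs_nonneg q
        have hr := abs_nonneg r; have hs := abs_nonneg s
        nlinarith

lemma one_add_sq_pow4 (y : ℝ) (h0 : 0 ≤ y) : (1 + y)^4 ≤ 16 * (1 + y^4) := by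
  nlinarith [sq_nonneg (y-1), sq_nonneg (y^2-1), sq_nonneg (y^2-y), sq_nonneg y,
    sq_nonneg (y^2+y-2), sq_nonneg (y^2 - 2*y), mul_nonneg (mul_nonneg h0 h0) h0]

/-- master uniform bound on `[a, b]`. -/
lemma gen_bound (K : ℕ → ℝ) (κ c p q r s a b : ℝ) (hκ : 0 ≤ κ)
    (hK : ∀ n, |K n| ≤ κ * (1 + (n : ℝ) ^ 2)) (hc : |c| ≤ 5)
    (n : ℕ) (t : ℝ) (h1 : a ≤ t) (h2 : t ≤ b) :
    |gen K c p q r s n t| ≤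
      (κ * (|p| + |q| + |r| + |s|) * (16 * (1 + Real.pi * Real.exp (4 * b)) ^ 3)
          * Real.exp (5 * (|a| + |b|)))
        * ((1 + (n : ℝ) ^ 8) * Real.exp (-(Real.pi * Real.exp (4 * a))) ^ n) := by
  have hπ : 0 < Real.pi := Real.pi_pos
  have hgen : |gen K c p q r s n t|
      = |K n| * |p * uu n t ^ 3 + q * uu n t ^ 2 + r * uu n t + s|
          * Real.exp (c * t - uu n t) := by
    unfold gen
    rw [abs_mul, abs_mul, Real.abs_exp]
  have hu0 : 0 ≤ uu n t := uu_nonneg n t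
  have hule : uu n t ≤ Real.pi * Real.exp (4 * b) * (n : ℝ) ^ 2 := by
    unfold uu
    have h := Real.exp_le_exp.2 (show 4*t ≤ 4*b by linarith)
    nlinarith [mul_le_mul_of_nonneg_left h (mul_nonneg Real.pi_pos.le (sq_nonneg (n:ℝ)))]
  have hlow : Real.pi * Real.exp (4 * a) * (n : ℝ) ^ 2 ≤ uu n t := by
    unfold uu
    have h := Real.exp_le_exp.2 (show 4*a ≤ 4*t by linarith)
    nlinarith [mul_le_mul_of_nonneg_left h (mul_nonneg Real.pi_pos.le (sq_nonneg (n:ℝ)))]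
  rw [hgen]
  generalize hU : uu n t = u at hu0 hule hlow
  -- poly bound
  have hpoly := poly_abs_bound p q r s hu0
  have h1u : 1 + u ≤ (1 + Real.pi * Real.exp (4 * b)) * (1 + (n : ℝ) ^ 2) := by
    have hE : 0 < Real.exp (4 * b) := Real.exp_pos _
    nlinarith [sq_nonneg (n : ℝ)]
  have hcube : (1+u)^3 ≤ (1 + Real.pi * Real.exp (4 * b)) ^ 3 * (1 + (n : ℝ) ^ 2) ^ 3 := by
    rw [← mul_pow]
    exact pow_le_pow_left₀ (by linarith) h1u 3
  -- exp part
  have hexp1 : Real.exp (c * t - u) = Real.exp (c * t) * Real.exp (-u) := by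
    rw [← Real.exp_add]; ring_nf
  have habs_t : |t| ≤ |a| + |b| := by
    rw [abs_le]
    constructor
    · have := neg_abs_le a; have := abs_nonneg b; linarith
    · have := le_abs_self b; have := abs_nonneg a; linarith
  have hct : Real.exp (c * t) ≤ Real.exp (5 * (|a| + |b|)) := by
    apply Real.exp_le_exp.2
    calc c * t ≤ |c * t| := le_abs_self _
      _ = |c| * |t| := abs_mul c t
      _ ≤ 5 * (|a| + |b|) := by
          have := abs_nonneg t
          have := abs_nonneg c
          nlinarith
  have hexpu : Real.exp (-u) ≤ Real.exp (-(Real.pi * Real.exp (4 * a))) ^ n := by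
    rw [← Real.exp_nat_mul]
    apply Real.exp_le_exp.2
    have hA : Real.pi * Real.exp (4 * a) * (n:ℝ) ≤ Real.pi * Real.exp (4*a) * (n:ℝ)^2 :=
      mul_le_mul_of_nonneg_left (nat_le_sq n) (mul_nonneg Real.pi_pos.le (Real.exp_pos _).le)
    have heq : (n:ℝ) * -(Real.pi * Real.exp (4*a)) = -(Real.pi * Real.exp (4*a) * (n:ℝ)) := by
      ring
    rw [heq]
    linarith
  have hn4 : (1 + (n:ℝ)^2)^4 ≤ 16 * (1 + (n:ℝ)^8) := by
    have := one_add_sq_pow4 ((n:ℝ)^2) (sq_nonneg _)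
    calc (1 + (n:ℝ)^2)^4 ≤ 16 * (1 + ((n:ℝ)^2)^4) := this
      _ = 16 * (1 + (n:ℝ)^8) := by ring_nf
  rw [hexp1]
  have e2 : 0 ≤ Real.exp (-u) := (Real.exp_pos _).le
  have hS : 0 ≤ |p| + |q| + |r| + |s| := by positivity
  have hpoly' : 0 ≤ |p * u ^ 3 + q * u ^ 2 + r * u + s| := abs_nonneg _
  have hMn : (0:ℝ) < 1 + Real.pi * Real.exp (4*b) := by positivity
  have hrn : (0:ℝ) ≤ Real.exp (-(Real.pi * Real.exp (4 * a))) ^ n := by positivity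
  have hE5 : (0:ℝ) ≤ Real.exp (5*(|a|+|b|)) := (Real.exp_pos _).le
  calc |K n| * |p * u ^ 3 + q * u ^ 2 + r * u + s| * (Real.exp (c*t) * Real.exp (-u))
      ≤ (κ * (1 + (n:ℝ)^2)) * ((|p| + |q| + |r| + |s|) * ((1 + Real.pi * Real.exp (4*b))^3 * (1 + (n:ℝ)^2)^3)) * (Real.exp (5*(|a|+|b|)) * Real.exp (-(Real.pi * Real.exp (4*a)))^n) := by
        apply mul_le_mul
        · apply mul_le_mul (hK n) (le_trans hpoly ?_) hpoly' ?_
          · exact mul_le_mul_of_nonneg_left hcube hS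
          · positivity
        · exact mul_le_mul hct hexpu e2 hE5
        · positivity
        · positivity
    _ = (κ * (|p| + |q| + |r| + |s|) * (1 + Real.pi * Real.exp (4*b))^3
          * (Real.exp (5*(|a|+|b|)) * Real.exp (-(Real.pi * Real.exp (4*a)))^n))
          * (1 + (n:ℝ)^2)^4 := by ring
    _ ≤ (κ * (|p| + |q| + |r| + |s|) * (1 + Real.pi * Real.exp (4*b))^3
          * (Real.exp (5*(|a|+|b|)) * Real.exp (-(Real.pi * Real.exp (4*a)))^n))
          * (16 * (1 + (n:ℝ)^8)) := by
        apply mul_le_mul_of_nonneg_left hn4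
        positivity
    _ = (κ * (|p| + |q| + |r| + |s|) * (16 * (1 + Real.pi * Real.exp (4 * b)) ^ 3)
          * Real.exp (5 * (|a| + |b|)))
        * ((1 + (n : ℝ) ^ 8) * Real.exp (-(Real.pi * Real.exp (4 * a))) ^ n) := by ring

/-- summability of the master bound family -/
lemma summable_master (C a : ℝ) :
    Summable (fun n : ℕ =>
      C * ((1 + (n : ℝ) ^ 8) * Real.exp (-(Real.pi * Real.exp (4 * a))) ^ n)) := by
  set r : ℝ := Real.exp (-(Real.pi * Real.exp (4 * a))) with hr
  have hr0 : 0 < r := Real.exp_pos _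
  have hr1 : r < 1 := by
    rw [hr, Real.exp_lt_one_iff]
    have := Real.pi_pos
    have := Real.exp_pos (4 * a)
    nlinarith
  have h1 : Summable (fun n : ℕ => r ^ n) := summable_geometric_of_lt_one hr0.le hr1
  have h2 : Summable (fun n : ℕ => (n : ℝ) ^ 8 * r ^ n) := by
    have : ‖r‖ < 1 := by rw [Real.norm_eq_abs, abs_of_pos hr0]; exact hr1
    exact summable_pow_mul_geometric_of_norm_lt_one 8 this
  have h3 : Summable (fun n : ℕ => r ^ n + (n:ℝ)^8 * r ^ n) := h1.add h2
  have h4 := h3.mul_left C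
  apply h4.congr
  intro n
  ring

lemma gen_abs_le (K : ℕ → ℝ) (κ c p q r s : ℝ) (hκ : 0 ≤ κ)
    (hK : ∀ n, |K n| ≤ κ * (1 + (n : ℝ) ^ 2)) (hc : |c| ≤ 5) (t : ℝ) (n : ℕ) :
    |gen K c p q r s n t| ≤
      (κ * (|p| + |q| + |r| + |s|) * (16 * (1 + Real.pi * Real.exp (4 * (t+1))) ^ 3)
          * Real.exp (5 * (|t-1| + |t+1|)))
        * ((1 + (n : ℝ) ^ 8) * Real.exp (-(Real.pi * Real.exp (4 * (t-1)))) ^ n) :=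
  gen_bound K κ c p q r s (t-1) (t+1) hκ hK hc n t (by linarith) (by linarith)

lemma summable_gen (K : ℕ → ℝ) (κ c p q r s : ℝ) (hκ : 0 ≤ κ)
    (hK : ∀ n, |K n| ≤ κ * (1 + (n : ℝ) ^ 2)) (hc : |c| ≤ 5) (t : ℝ) :
    Summable (fun n : ℕ => gen K c p q r s n t) := by
  apply Summable.of_abs
  apply Summable.of_nonneg_of_le (fun n => abs_nonneg _)
    (fun n => gen_abs_le K κ c p q r s hκ hK hc t n)
  exact summable_master _ _

lemma summable_gen_shift (K : ℕ → ℝ) (κ c p q r s : ℝ) (hκ : 0 ≤ κ)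
    (hK : ∀ n, |K n| ≤ κ * (1 + (n : ℝ) ^ 2)) (hc : |c| ≤ 5) (t : ℝ) :
    Summable (fun n : ℕ => gen K c p q r s (n + 1) t) :=
  (summable_nat_add_iff 1).2 (summable_gen K κ c p q r s hκ hK hc t)

/-- Termwise differentiation of the shifted series. -/
lemma hasDerivAt_tsum_gen (K : ℕ → ℝ) (κ c q r s : ℝ) (hκ : 0 ≤ κ)
    (hK : ∀ n, |K n| ≤ κ * (1 + (n : ℝ) ^ 2)) (hc : |c| ≤ 5) (t : ℝ) :
    HasDerivAt (fun y => ∑' n : ℕ, gen K c 0 q r s (n + 1) y)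
      (∑' n : ℕ, gen K c (-4*q) (c*q + 8*q - 4*r) (c*r + 4*r - 4*s) (c*s) (n + 1) t) t := by
  set p' := (-4*q : ℝ)
  set q' := (c*q + 8*q - 4*r : ℝ)
  set r' := (c*r + 4*r - 4*s : ℝ)
  set s' := (c*s : ℝ)
  apply hasDerivAt_tsum_of_isPreconnected
    (u := fun n : ℕ =>
      (κ * (|p'| + |q'| + |r'| + |s'|) * (16 * (1 + Real.pi * Real.exp (4 * (t+1))) ^ 3)
          * Real.exp (5 * (|t-1| + |t+1|)))
        * ((1 + ((n+1 : ℕ) : ℝ) ^ 8) * Real.exp (-(Real.pi * Real.exp (4 * (t-1)))) ^ (n+1)))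
    (ht := isOpen_Ioo (a := t - 1) (b := t + 1))
    (h't := isPreconnected_Ioo) (y₀ := t) (hy₀ := by constructor <;> linarith)
    (hy := by constructor <;> linarith)
  · apply Summable.of_nonneg_of_le
    · intro n; positivity
    · intro n
      exact le_refl _
    · exact (summable_nat_add_iff 1).2 (summable_master _ _)
  · intro n y _
    exact hasDerivAt_gen K c q r s (n+1) y
  · intro n y hy
    rw [Real.norm_eq_abs]
    exact gen_bound K κ c p' q' r' s' (t-1) (t+1) hκ hK hc (n+1) y hy.1.le hy.2.le
  · exact summable_gen_shift K κ c 0 q r s hκ hK hc t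

noncomputable def KA : ℕ → ℝ := fun n => Real.pi * (n : ℝ) ^ 2
noncomputable def Kw : ℕ → ℝ := fun _ => 2

lemma KA_bound : ∀ n : ℕ, |KA n| ≤ 4 * (1 + (n : ℝ) ^ 2) := by
  intro n
  have h1 : (0:ℝ) ≤ Real.pi * (n:ℝ)^2 := mul_nonneg Real.pi_pos.le (sq_nonneg _)
  rw [KA, abs_of_nonneg h1]
  nlinarith [Real.pi_le_four, sq_nonneg (n:ℝ)]

lemma Kw_bound : ∀ n : ℕ, |Kw n| ≤ 2 * (1 + (n : ℝ) ^ 2) := by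
  intro n
  rw [Kw, abs_of_nonneg (by norm_num)]
  nlinarith [sq_nonneg (n:ℝ)]

lemma jacobiA_eq (n : ℕ) : jacobiA n = gen KA 5 0 0 2 (-3) n := by
  funext t
  simp only [jacobiA, gen, KA, uu]
  ring

lemma jacobiPhi_eq : jacobiPhi = fun t => ∑' n : ℕ, gen KA 5 0 0 2 (-3) (n + 1) t := by
  funext t
  simp only [jacobiPhi]
  exact tsum_congr fun n => by rw [jacobiA_eq]

/-- Φ' as a series -/
noncomputable def Phi1 (t : ℝ) : ℝ := ∑' n : ℕ, gen KA 5 0 (-8) 30 (-15) (n + 1) t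
/-- Φ'' as a series -/
noncomputable def Phi2 (t : ℝ) : ℝ := ∑' n : ℕ, gen KA 5 32 (-224) 330 (-75) (n + 1) t

lemma hasDerivAt_jacobiPhi (t : ℝ) : HasDerivAt jacobiPhi (Phi1 t) t := by
  rw [jacobiPhi_eq]
  have h := hasDerivAt_tsum_gen KA 4 5 0 2 (-3) (by norm_num) KA_bound (by norm_num) t
  convert h using 2 with n
  norm_num [Phi1]

lemma hasDerivAt_Phi1 (t : ℝ) : HasDerivAt Phi1 (Phi2 t) t := by
  have h := hasDerivAt_tsum_gen KA 4 5 (-8) 30 (-15) (by norm_num) KA_bound (by norm_num) t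
  have e1 : Phi1 = fun y => ∑' n : ℕ, gen KA 5 0 (-8) 30 (-15) (n + 1) y := rfl
  rw [e1]
  convert h using 2
  simp only [Phi2]
  exact tsum_congr fun n => by norm_num

/-! ### Part (i): positivity -/

lemma jacobiA_pos {n : ℕ} (hn : 1 ≤ n) {t : ℝ} (ht : 0 ≤ t) : 0 < jacobiA n t := by
  have hn1 : (1:ℝ) ≤ (n:ℝ) := by exact_mod_cast hn
  have hE : (1:ℝ) ≤ Real.exp (4 * t) := by
    have := Real.add_one_le_exp (4 * t); linarith
  have hπ := Real.pi_gt_three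
  have h1 : 0 < Real.pi * (n:ℝ)^2 := by nlinarith
  have h2 : 0 < 2 * Real.pi * (n:ℝ)^2 * Real.exp (4*t) - 3 := by nlinarith
  have h3 : 0 < Real.exp (5 * t - Real.pi * (n:ℝ)^2 * Real.exp (4*t)) := Real.exp_pos _
  exact mul_pos (mul_pos h1 h2) h3

lemma summable_jacobiA (t : ℝ) : Summable (fun n : ℕ => jacobiA (n + 1) t) := by
  have := summable_gen_shift KA 4 5 0 0 2 (-3) (by norm_num) KA_bound (by norm_num) t
  exact this.congr fun n => by rw [jacobiA_eq]

lemma jacobiPhi_pos {t : ℝ} (ht : 0 ≤ t) : 0 < jacobiPhi t := by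
  have h := Summable.tsum_pos (summable_jacobiA t)
    (fun n => (jacobiA_pos (Nat.le_add_left 1 n) ht).le) 0
    (jacobiA_pos (Nat.le_add_left 1 0) ht)
  simpa [jacobiPhi] using h

/-! ### Part (ii): evenness -/

noncomputable def WW (t : ℝ) : ℝ := Real.exp t + ∑' n : ℕ, gen Kw 1 0 0 0 1 (n + 1) t
noncomputable def W1 (t : ℝ) : ℝ := Real.exp t + ∑' n : ℕ, gen Kw 1 0 0 (-4) 1 (n + 1) t
noncomputable def W2 (t : ℝ) : ℝ := Real.exp t + ∑' n : ℕ, gen Kw 1 0 16 (-24) 1 (n + 1) t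

lemma hasDerivAt_WW (t : ℝ) : HasDerivAt WW (W1 t) t := by
  have h := hasDerivAt_tsum_gen Kw 2 1 0 0 1 (by norm_num) Kw_bound (by norm_num) t
  have := (Real.hasDerivAt_exp t).add h
  have e1 : WW = fun y => Real.exp y + ∑' n : ℕ, gen Kw 1 0 0 0 1 (n + 1) y := rfl
  rw [e1]
  refine this.congr_deriv ?_
  norm_num [W1]

lemma hasDerivAt_W1 (t : ℝ) : HasDerivAt W1 (W2 t) t := by
  have h := hasDerivAt_tsum_gen Kw 2 1 0 (-4) 1 (by norm_num) Kw_bound (by norm_num) t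
  have := (Real.hasDerivAt_exp t).add h
  have e1 : W1 = fun y => Real.exp y + ∑' n : ℕ, gen Kw 1 0 0 (-4) 1 (n + 1) y := rfl
  rw [e1]
  refine this.congr_deriv ?_
  norm_num [W2]

lemma summable_theta_nat {x : ℝ} (hx : 0 < x) :
    Summable (fun n : ℕ => Real.exp (-Real.pi * x * ((n:ℝ)) ^ 2)) := by
  set r : ℝ := Real.exp (-(Real.pi * x)) with hr
  have hπx : 0 < Real.pi * x := mul_pos Real.pi_pos hx
  have hr0 : 0 < r := Real.exp_pos _
  have hr1 : r < 1 := by rw [hr, Real.exp_lt_one_iff]; linarith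
  apply Summable.of_nonneg_of_le (fun n => (Real.exp_pos _).le)
    (fun n => ?_) (summable_geometric_of_lt_one hr0.le hr1)
  rw [hr, ← Real.exp_nat_mul]
  apply Real.exp_le_exp.2
  have h1 : Real.pi * x * (n:ℝ) ≤ Real.pi * x * (n:ℝ)^2 :=
    mul_le_mul_of_nonneg_left (nat_le_sq n) hπx.le
  nlinarith

lemma theta_split {x : ℝ} (hx : 0 < x) :
    (∑' n : ℤ, Real.exp (-Real.pi * x * ((n:ℝ)) ^ 2))
      = 1 + 2 * ∑' n : ℕ, Real.exp (-Real.pi * x * ((n:ℝ) + 1) ^ 2) := by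
  set f : ℤ → ℝ := fun n => Real.exp (-Real.pi * x * ((n:ℝ)) ^ 2) with hf
  have hs1 : Summable (fun n : ℕ => f n) := by
    apply (summable_theta_nat hx).congr
    intro n; simp [hf]
  have hs1' : Summable (fun n : ℕ => Real.exp (-Real.pi * x * ((n:ℝ) + 1) ^ 2)) := by
    have := (summable_nat_add_iff 1).2 (summable_theta_nat hx)
    apply this.congr
    intro n; push_cast; ring_nf
  have hsneg : Summable (fun n : ℕ => f (-(n:ℤ))) := by
    apply hs1.congr
    intro n; simp [hf]
  have hsZ : Summable f := Summable.of_nat_of_neg hs1 hsneg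
  rw [← tsum_nat_add_neg_add_one hsZ]
  have e : ∀ n : ℕ, f n + f (-((n:ℤ)+1))
      = Real.exp (-Real.pi * x * ((n:ℝ)) ^ 2) + Real.exp (-Real.pi * x * ((n:ℝ)+1) ^ 2) := by
    intro n
    have h1 : ((-((n:ℤ)+1) : ℤ) : ℝ) ^ 2 = ((n:ℝ)+1)^2 := by push_cast; ring
    simp only [hf, h1]
    norm_num
  rw [tsum_congr e, Summable.tsum_add (by exact_mod_cast hs1.congr (fun n => by simp [hf])) hs1']
  have h0 : (∑' n : ℕ, Real.exp (-Real.pi * x * ((n:ℝ)) ^ 2))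
      = 1 + ∑' n : ℕ, Real.exp (-Real.pi * x * ((n:ℝ)+1) ^ 2) := by
    rw [Summable.tsum_eq_zero_add (summable_theta_nat hx)]
    norm_num
  rw [h0]; ring

lemma WW_theta (t : ℝ) :
    WW t = Real.exp t * ∑' n : ℤ, Real.exp (-Real.pi * Real.exp (4*t) * ((n:ℝ)) ^ 2) := by
  have hx : 0 < Real.exp (4*t) := Real.exp_pos _
  rw [theta_split hx]
  have : (∑' n : ℕ, gen Kw 1 0 0 0 1 (n + 1) t)
      = ∑' n : ℕ, (2 * Real.exp t) * Real.exp (-Real.pi * Real.exp (4*t) * ((n:ℝ)+1)^2) := by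
    apply tsum_congr
    intro n
    simp only [gen, Kw, uu]
    rw [show (1:ℝ) * t - Real.pi * ((n+1 : ℕ):ℝ)^2 * Real.exp (4*t)
        = t + (-Real.pi * Real.exp (4*t) * (((n:ℝ))+1)^2) by push_cast; ring,
      Real.exp_add]
    ring
  rw [WW, this, tsum_mul_left]
  ring

lemma WW_even (t : ℝ) : WW (-t) = WW t := by
  rw [WW_theta, WW_theta]
  have hx : (0:ℝ) < Real.exp (-(4*t)) := Real.exp_pos _
  have key := Real.tsum_exp_neg_mul_int_sq hx
  have e4 : (4 : ℝ) * -t = -(4*t) := by ring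
  rw [e4, key]
  have h1 : Real.exp (-(4*t)) ^ ((1:ℝ)/2 : ℝ) = Real.exp (-(2*t)) := by
    rw [Real.rpow_def_of_pos (Real.exp_pos _), Real.log_exp]
    norm_num
    ring_nf
  have h2 : (∑' n : ℤ, Real.exp (-Real.pi / Real.exp (-(4*t)) * ((n:ℝ)) ^ 2))
      = ∑' n : ℤ, Real.exp (-Real.pi * Real.exp (4*t) * ((n:ℝ)) ^ 2) := by
    apply tsum_congr
    intro n
    congr 1
    rw [Real.exp_neg, div_inv_eq_mul]
  rw [h1, h2]
  rw [Real.exp_neg (2*t)]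
  have h3 : Real.exp (-t) * (1 / (Real.exp (2*t))⁻¹
        * ∑' n : ℤ, Real.exp (-Real.pi * Real.exp (4*t) * ((n:ℝ)) ^ 2))
      = (Real.exp (-t) * Real.exp (2*t))
        * ∑' n : ℤ, Real.exp (-Real.pi * Real.exp (4*t) * ((n:ℝ)) ^ 2) := by
    field_simp
  rw [h3, ← Real.exp_add]
  have e5 : -t + 2*t = t := by ring
  rw [e5]

lemma w2_sub_w (m : ℕ) (t : ℝ) :
    gen Kw 1 0 16 (-24) 1 m t - gen Kw 1 0 0 0 1 m t = 16 * jacobiA m t := by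
  simp only [gen, Kw, uu, jacobiA]
  rw [show (5:ℝ) * t - Real.pi * (m:ℝ)^2 * Real.exp (4*t)
      = (1 * t - Real.pi * (m:ℝ)^2 * Real.exp (4*t)) + 4*t by ring, Real.exp_add]
  ring

lemma phi_from_W (t : ℝ) : jacobiPhi t = (W2 t - WW t) / 16 := by
  have hs0 : Summable (fun n : ℕ => gen Kw 1 0 0 0 1 (n+1) t) :=
    summable_gen_shift Kw 2 1 0 0 0 1 (by norm_num) Kw_bound (by norm_num) t
  have hs2 : Summable (fun n : ℕ => gen Kw 1 0 16 (-24) 1 (n+1) t) :=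
    summable_gen_shift Kw 2 1 0 16 (-24) 1 (by norm_num) Kw_bound (by norm_num) t
  have h1 : W2 t - WW t
      = ∑' n : ℕ, (gen Kw 1 0 16 (-24) 1 (n+1) t - gen Kw 1 0 0 0 1 (n+1) t) := by
    rw [W2, WW, Summable.tsum_sub hs2 hs0]
    ring
  rw [h1]
  have h2 : ∀ n : ℕ, gen Kw 1 0 16 (-24) 1 (n+1) t - gen Kw 1 0 0 0 1 (n+1) t
      = 16 * jacobiA (n+1) t := fun n => w2_sub_w (n+1) t
  rw [tsum_congr h2, tsum_mul_left, jacobiPhi]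
  ring

lemma deriv_WW : deriv WW = W1 := funext fun t => (hasDerivAt_WW t).deriv

lemma deriv_W1 : deriv W1 = W2 := funext fun t => (hasDerivAt_W1 t).deriv

lemma W1_odd (t : ℝ) : W1 (-t) = -W1 t := by
  have hWe : (fun s : ℝ => WW (-s)) = WW := funext fun s => WW_even s
  have h1 : deriv (fun s : ℝ => WW (-s)) t = -deriv WW (-t) := deriv_comp_neg WW t
  rw [hWe, deriv_WW] at h1
  linarith [h1]

lemma W2_even (t : ℝ) : W2 (-t) = W2 t := by
  have hW1o : W1 = (fun s : ℝ => -W1 (-s)) := funext fun s => by rw [W1_odd]; ring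
  have h1 : deriv (fun s : ℝ => W1 (-s)) t = -deriv W1 (-t) := deriv_comp_neg W1 t
  have h2 : deriv (fun s : ℝ => -W1 (-s)) t = -deriv (fun s : ℝ => W1 (-s)) t :=
    deriv.neg
  have h3 : deriv W1 t = deriv (fun s : ℝ => -W1 (-s)) t := by rw [← hW1o]
  rw [h2, h1, deriv_W1] at h3
  simp only [neg_neg] at h3
  exact h3.symm

lemma jacobiPhi_even (t : ℝ) : jacobiPhi (-t) = jacobiPhi t := by
  rw [phi_from_W, phi_from_W, WW_even, W2_even]

/-! ### Part (iii): Φ' < 0 on (0, ∞) -/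

lemma exp3_le : Real.exp 3 ≤ 20.09 := by
  have h := Real.exp_one_lt_d9
  have h3 : Real.exp 3 = Real.exp 1 ^ (3:ℕ) := by
    rw [← Real.exp_nat_mul]; norm_num
  rw [h3]
  calc Real.exp 1 ^ (3:ℕ) ≤ 2.7182818286 ^ (3:ℕ) :=
        pow_le_pow_left₀ (Real.exp_pos 1).le h.le 3
    _ ≤ 20.09 := by norm_num

lemma exp_328_le : Real.exp 3.28 ≤ 28 := by
  have h1 : Real.exp 3.28 = Real.exp 3 * Real.exp 0.28 := by
    rw [← Real.exp_add]; norm_num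
  have h2 : Real.exp 0.28 ≤ 1 / 0.72 := by
    have h := Real.add_one_le_exp (-0.28)
    have hp : (0.72:ℝ) ≤ Real.exp (-0.28) := by linarith
    have := Real.exp_pos (-0.28)
    rw [show (0.28:ℝ) = -(-0.28) by norm_num, Real.exp_neg]
    rw [le_div_iff₀ (by norm_num)]
    calc (Real.exp (-0.28))⁻¹ * 0.72 ≤ (Real.exp (-0.28))⁻¹ * Real.exp (-0.28) := by
          apply mul_le_mul_of_nonneg_left hp (by positivity)
      _ = 1 := inv_mul_cancel₀ (by positivity)
  rw [h1]
  calc Real.exp 3 * Real.exp 0.28 ≤ 20.09 * (1/0.72) :=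
        mul_le_mul exp3_le h2 (Real.exp_pos _).le (by norm_num)
    _ ≤ 28 := by norm_num

lemma exp12_ge : (160000:ℝ) ≤ Real.exp 12 := by
  have h := Real.exp_one_gt_d9
  have h12 : Real.exp 12 = Real.exp 1 ^ (12:ℕ) := by
    rw [← Real.exp_nat_mul]; norm_num
  rw [h12]
  calc (160000:ℝ) ≤ 2.7182818283 ^ (12:ℕ) := by norm_num
    _ ≤ Real.exp 1 ^ (12:ℕ) := pow_le_pow_left₀ (by norm_num) h.le 12

lemma exp11_ge : (59000:ℝ) ≤ Real.exp 11 := by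
  have h := Real.exp_one_gt_d9
  have h11 : Real.exp 11 = Real.exp 1 ^ (11:ℕ) := by
    rw [← Real.exp_nat_mul]; norm_num
  rw [h11]
  calc (59000:ℝ) ≤ 2.7182818283 ^ (11:ℕ) := by norm_num
    _ ≤ Real.exp 1 ^ (11:ℕ) := pow_le_pow_left₀ (by norm_num) h.le 11

/-- `exp x ≤ 1/(1-x)` for `0 ≤ x < 1` -/
lemma exp_le_inv_one_sub {x : ℝ} (h0 : 0 ≤ x) (h1 : x < 1) :
    Real.exp x ≤ 1 / (1 - x) := by
  have h := Real.add_one_le_exp (-x)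
  have hp : 1 - x ≤ Real.exp (-x) := by linarith
  have key : Real.exp x * (1 - x) ≤ 1 := by
    have h2 : Real.exp x * (1-x) ≤ Real.exp x * Real.exp (-x) :=
      mul_le_mul_of_nonneg_left hp (Real.exp_pos x).le
    rwa [← Real.exp_add, add_neg_cancel, Real.exp_zero] at h2
  rw [le_div_iff₀ (by linarith)]
  linarith

lemma sq_le_exp {m : ℝ} (hm : 0 ≤ m) : m ^ 2 ≤ Real.exp m := by
  have h1 : 1 + m/4 ≤ Real.exp (m/4) := by
    have := Real.add_one_le_exp (m/4); linarith
  have h2 : m ≤ (1 + m/4)^2 := by nlinarith [sq_nonneg (m-4)]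
  have h3 : m^2 ≤ ((1 + m/4)^2)^2 := by
    apply pow_le_pow_left₀ hm h2 2
  have h4 : ((1 + m/4)^2)^2 ≤ (Real.exp (m/4))^4 := by
    rw [← pow_mul]
    exact pow_le_pow_left₀ (by linarith) h1 4
  have h5 : (Real.exp (m/4))^4 = Real.exp m := by
    rw [← Real.exp_nat_mul]; ring_nf
  linarith
 
lemma cube_le_exp {u : ℝ} (hu : 0 ≤ u) : u ^ 3 ≤ 216 * Real.exp (u/2) := by
  have h1 : u ≤ 6 * Real.exp (u/6) := by
    have := Real.add_one_le_exp (u/6)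
    have := Real.exp_pos (u/6)
    nlinarith
  have h2 : u^3 ≤ (6 * Real.exp (u/6))^3 := pow_le_pow_left₀ hu h1 3
  have h3 : (6 * Real.exp (u/6))^3 = 216 * (Real.exp (u/6))^3 := by ring
  have h4 : (Real.exp (u/6))^3 = Real.exp (u/2) := by
    rw [← Real.exp_nat_mul]; ring_nf
  rw [h3, h4] at h2
  exact h2

lemma u_upper_one {c : ℝ} (h0 : 0 ≤ c) (h1 : c ≤ 1/100) :
    Real.exp (4 * c) ≤ 1 / 0.96 := by
  calc Real.exp (4*c) ≤ Real.exp 0.04 := Real.exp_le_exp.2 (by linarith)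
    _ ≤ 1 / (1 - 0.04) := exp_le_inv_one_sub (by norm_num) (by norm_num)
    _ = 1 / 0.96 := by norm_num

lemma exp5c_le {c : ℝ} (h0 : 0 ≤ c) (h1 : c ≤ 1/100) :
    Real.exp (5 * c) ≤ 1 / 0.95 := by
  calc Real.exp (5*c) ≤ Real.exp 0.05 := Real.exp_le_exp.2 (by linarith)
    _ ≤ 1 / (1 - 0.05) := exp_le_inv_one_sub (by norm_num) (by norm_num)
    _ = 1 / 0.95 := by norm_num

lemma A2_one_bound {c : ℝ} (h0 : 0 ≤ c) (h1 : c ≤ 1/100) :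
    gen KA 5 32 (-224) 330 (-75) 1 c ≤ -28 := by
  have hπl := Real.pi_gt_d6
  have hπu := Real.pi_lt_d6
  simp only [gen, KA, uu, Nat.cast_one, one_pow, mul_one]
  set u := Real.pi * Real.exp (4 * c) with hu
  have hE1 : (1:ℝ) ≤ Real.exp (4*c) := by
    have := Real.add_one_le_exp (4*c); linarith
  have hu1 : 3.14 ≤ u := by rw [hu]; nlinarith
  have hu2 : u ≤ 3.28 := by
    rw [hu]
    have := u_upper_one h0 h1
    nlinarith [Real.exp_pos (4*c)]
  have hP : 32 * u^3 + (-224) * u^2 + 330 * u + (-75) ≤ -250 := by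
    nlinarith [sq_nonneg (u - 3.14), sq_nonneg (u - 3.28), mul_nonneg (sub_nonneg.2 hu1) (sub_nonneg.2 hu2)]
  have hX : 1/28 ≤ Real.exp (5 * c - u) := by
    have h5 : 5 * c - u ≥ -3.28 := by nlinarith
    calc (1:ℝ)/28 ≤ 1 / Real.exp 3.28 := by
          have := exp_328_le
          have := Real.exp_pos (3.28:ℝ)
          rw [div_le_div_iff₀ (by norm_num) this]
          linarith
      _ = Real.exp (-3.28) := by rw [Real.exp_neg]; norm_num
      _ ≤ Real.exp (5*c - u) := Real.exp_le_exp.2 (by linarith)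
  have hXpos : 0 < Real.exp (5*c-u) := Real.exp_pos _
  have hX2 : Real.exp (5*c-u) ≤ 1 := by
    apply Real.exp_le_one_iff.2  -- maybe wrong name
    nlinarith
  nlinarith [mul_le_mul_of_nonneg_right hP hXpos.le,
    mul_le_mul_of_nonneg_left hX (show (0:ℝ) ≤ 250 by norm_num)]

lemma A2_two_bound {c : ℝ} (h0 : 0 ≤ c) (h1 : c ≤ 1/100) :
    gen KA 5 32 (-224) 330 (-75) 2 c ≤ 7 := by
  have hπl := Real.pi_gt_d6
  have hπu := Real.pi_lt_d6
  simp only [gen, KA, uu]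
  norm_num
  set u := Real.pi * 4 * Real.exp (4 * c) with hu
  have hE1 : (1:ℝ) ≤ Real.exp (4*c) := by
    have := Real.add_one_le_exp (4*c); linarith
  have hu1 : 12.56 ≤ u := by rw [hu]; nlinarith
  have hu2 : u ≤ 13.09 := by
    rw [hu]
    have := u_upper_one h0 h1
    nlinarith [Real.exp_pos (4*c)]
  have hP : 32 * u^3 + (-224) * u^2 + 330 * u + (-75) ≤ 35 * u^3 := by
    nlinarith [sq_nonneg u, sq_nonneg (u - 12)]
  have hu3 : u^3 ≤ 2244 := by nlinarith
  have hX : Real.exp (5 * c - u) ≤ (1/0.95) * (1/160000) := by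
    have hsplit : Real.exp (5*c-u) = Real.exp (5*c) * Real.exp (-u) := by
      rw [← Real.exp_add]; ring_nf
    rw [hsplit]
    apply mul_le_mul (exp5c_le h0 h1) ?_ (Real.exp_pos _).le (by norm_num)
    calc Real.exp (-u) ≤ Real.exp (-12) := Real.exp_le_exp.2 (by linarith)
      _ = 1 / Real.exp 12 := by rw [Real.exp_neg]; norm_num
      _ ≤ 1 / 160000 := by
          rw [div_le_div_iff₀ (Real.exp_pos _) (by norm_num)]
          linarith [exp12_ge]
  have hXpos : 0 < Real.exp (5*c-u) := Real.exp_pos _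
  have hPpos : 0 ≤ 32 * u^3 + (-224) * u^2 + 330 * u + (-75) := by nlinarith
  have key : Real.pi * 4 * (32 * u^3 + (-224) * u^2 + 330 * u + (-75)) * Real.exp (5*c-u) ≤ 7 := by
    calc Real.pi * 4 * (32 * u^3 + (-224) * u^2 + 330 * u + (-75)) * Real.exp (5*c-u)
      ≤ Real.pi * 4 * (35 * u^3) * ((1/0.95) * (1/160000)) := by
          apply mul_le_mul
          · apply mul_le_mul_of_nonneg_left hP (by positivity)
          · exact hX
          · exact hXpos.le
          · positivity
      _ ≤ 3.141593 * 4 * (35 * 2244) * ((1/0.95) * (1/160000)) := by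
          apply mul_le_mul_of_nonneg_right ?_ (by norm_num)
          apply mul_le_mul ?_ (by nlinarith) (by nlinarith) (by norm_num)
          nlinarith
      _ ≤ 7 := by norm_num
  linarith [key]

lemma A2_tail_term_bound {c : ℝ} (h0 : 0 ≤ c) (h1 : c ≤ 1/100)
    {m : ℕ} (hm : 3 ≤ m) :
    gen KA 5 32 (-224) 330 (-75) m c ≤ 25200 * Real.exp (-3.7 * (m:ℝ)) := by
  have hπl := Real.pi_gt_d6
  have hπu := Real.pi_lt_d6
  have hmr : (3:ℝ) ≤ (m:ℝ) := by exact_mod_cast hm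
  simp only [gen, KA, uu]
  set u := Real.pi * (m:ℝ)^2 * Real.exp (4 * c) with hu
  have hE1 : (1:ℝ) ≤ Real.exp (4*c) := by
    have := Real.add_one_le_exp (4*c); linarith
  have hm2 : (9:ℝ) ≤ (m:ℝ)^2 := by nlinarith
  have hu1 : Real.pi * (m:ℝ)^2 ≤ u := by
    rw [hu]; nlinarith [mul_pos Real.pi_pos (show (0:ℝ) < (m:ℝ)^2 by nlinarith)]
  have hu0 : (12:ℝ) ≤ u := by nlinarith
  have hP : 32 * u^3 + (-224) * u^2 + 330 * u + (-75) ≤ 35 * u^3 := by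
    nlinarith [sq_nonneg u, sq_nonneg (u - 12)]
  -- u^3 ≤ 216 e^{u/2}
  have hcube := cube_le_exp (show (0:ℝ) ≤ u by linarith)
  -- main chain
  have hsplit : Real.exp (5*c-u) = Real.exp (5*c) * Real.exp (-u) := by
    rw [← Real.exp_add]; ring_nf
  have h5c : Real.exp (5*c) ≤ 1/0.95 := exp5c_le h0 h1
  have hXpos : 0 < Real.exp (5*c-u) := Real.exp_pos _
  have step1 : Real.pi * (m:ℝ)^2 * (32 * u^3 + (-224) * u^2 + 330 * u + (-75))
        * Real.exp (5*c-u)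
      ≤ Real.pi * (m:ℝ)^2 * (35 * (216 * Real.exp (u/2))) * ((1/0.95) * Real.exp (-u)) := by
    rw [hsplit]
    apply mul_le_mul
    · apply mul_le_mul_of_nonneg_left ?_ (by positivity)
      calc 32 * u^3 + (-224) * u^2 + 330 * u + (-75) ≤ 35 * u^3 := hP
        _ ≤ 35 * (216 * Real.exp (u/2)) := by nlinarith [hcube]
    · exact mul_le_mul h5c (le_refl _) (Real.exp_pos _).le (by norm_num)
    · positivity
    · positivity
  have hcollapse : Real.exp (u/2) * Real.exp (-u) = Real.exp (-(u/2)) := by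
    rw [← Real.exp_add]; ring_nf
  have step2 : Real.pi * (m:ℝ)^2 * (35 * (216 * Real.exp (u/2))) * ((1/0.95) * Real.exp (-u))
      = (Real.pi * 35 * 216 * (1/0.95)) * ((m:ℝ)^2 * Real.exp (-(u/2))) := by
    rw [← hcollapse]; ring
  -- m² e^{-u/2} ≤ e^{-3.7 m}
  have hmexp : (m:ℝ)^2 ≤ Real.exp (m:ℝ) := sq_le_exp (by positivity)
  have hexpmono : Real.exp (-(u/2)) ≤ Real.exp (-(Real.pi * (m:ℝ)^2 / 2)) :=
    Real.exp_le_exp.2 (by linarith)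
  have step3 : (m:ℝ)^2 * Real.exp (-(u/2)) ≤ Real.exp (-3.7 * (m:ℝ)) := by
    calc (m:ℝ)^2 * Real.exp (-(u/2))
        ≤ Real.exp (m:ℝ) * Real.exp (-(Real.pi * (m:ℝ)^2 / 2)) := by
          apply mul_le_mul hmexp hexpmono (Real.exp_pos _).le (Real.exp_pos _).le
      _ = Real.exp ((m:ℝ) - Real.pi * (m:ℝ)^2 / 2) := by rw [← Real.exp_add]; ring_nf
      _ ≤ Real.exp (-3.7 * (m:ℝ)) := by
          apply Real.exp_le_exp.2
          nlinarith
  calc Real.pi * (m:ℝ)^2 * (32 * u^3 + (-224) * u^2 + 330 * u + (-75)) * Real.exp (5*c-u)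
      ≤ (Real.pi * 35 * 216 * (1/0.95)) * ((m:ℝ)^2 * Real.exp (-(u/2))) := by
        rw [← step2]; exact step1
    _ ≤ (Real.pi * 35 * 216 * (1/0.95)) * Real.exp (-3.7 * (m:ℝ)) := by
        apply mul_le_mul_of_nonneg_left step3 (by positivity)
    _ ≤ 25200 * Real.exp (-3.7 * (m:ℝ)) := by
        apply mul_le_mul_of_nonneg_right ?_ (Real.exp_pos _).le
        nlinarith

lemma A2_tail_sum_bound {c : ℝ} (h0 : 0 ≤ c) (h1 : c ≤ 1/100) :
    (∑' n : ℕ, gen KA 5 32 (-224) 330 (-75) (n + 3) c) ≤ 20 := by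
  have hgeo0 : (0:ℝ) < Real.exp (-3.7) := Real.exp_pos _
  have hgeo1 : Real.exp (-3.7) < 1 := Real.exp_lt_one_iff.2 (by norm_num)
  have hsum : Summable (fun n : ℕ => gen KA 5 32 (-224) 330 (-75) (n + 3) c) :=
    (summable_nat_add_iff (f := fun m : ℕ => gen KA 5 32 (-224) 330 (-75) m c) 3).2 (summable_gen KA 4 5 32 (-224) 330 (-75) (by norm_num)
      KA_bound (by norm_num) c)
  have hBeq : ∀ n : ℕ, 25200 * Real.exp (-3.7 * ((n:ℝ)+3))
      = (25200 * Real.exp (-11.1)) * Real.exp (-3.7) ^ n := by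
    intro n
    rw [← Real.exp_nat_mul, mul_assoc, ← Real.exp_add]
    congr 1
    push_cast
    ring
  have hBsum : Summable (fun n : ℕ => 25200 * Real.exp (-3.7 * ((n:ℝ)+3))) := by
    apply ((summable_geometric_of_lt_one hgeo0.le hgeo1).mul_left
      (25200 * Real.exp (-11.1))).congr
    intro n
    rw [hBeq]
  have hle : ∀ n : ℕ, gen KA 5 32 (-224) 330 (-75) (n + 3) c
      ≤ 25200 * Real.exp (-3.7 * ((n:ℝ)+3)) := by
    intro n
    have := A2_tail_term_bound h0 h1 (show 3 ≤ n + 3 by omega)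
    have hc : ((n + 3 : ℕ) : ℝ) = (n:ℝ) + 3 := by push_cast; ring
    rwa [hc] at this
  calc (∑' n : ℕ, gen KA 5 32 (-224) 330 (-75) (n + 3) c)
      ≤ ∑' n : ℕ, 25200 * Real.exp (-3.7 * ((n:ℝ)+3)) := Summable.tsum_le_tsum hle hsum hBsum
    _ = (25200 * Real.exp (-11.1)) * ∑' n : ℕ, Real.exp (-3.7) ^ n := by
        rw [tsum_congr hBeq, tsum_mul_left]
    _ = (25200 * Real.exp (-11.1)) * (1 - Real.exp (-3.7))⁻¹ := by
        rw [tsum_geometric_of_lt_one hgeo0.le hgeo1]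
    _ ≤ 20 := by
        have h2 : Real.exp (-11.1) ≤ 1/59000 := by
          calc Real.exp (-11.1) ≤ Real.exp (-11) := Real.exp_le_exp.2 (by norm_num)
            _ = 1 / Real.exp 11 := by rw [Real.exp_neg]; norm_num
            _ ≤ 1/59000 := by
                rw [div_le_div_iff₀ (Real.exp_pos _) (by norm_num)]
                linarith [exp11_ge]
        have h3 : Real.exp (-3.7) ≤ 1/2 := by
          calc Real.exp (-3.7) ≤ Real.exp (-1) := Real.exp_le_exp.2 (by norm_num)
            _ = 1 / Real.exp 1 := by rw [Real.exp_neg]; norm_num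
            _ ≤ 1/2 := by
                rw [div_le_div_iff₀ (Real.exp_pos _) (by norm_num)]
                have := Real.add_one_le_exp 1
                linarith
        have h4 : (1 - Real.exp (-3.7))⁻¹ ≤ 2 := by
          rw [inv_le_comm₀ (by linarith) (by norm_num)]
          linarith
        have h5 : 0 < (1 - Real.exp (-3.7))⁻¹ := by
          apply inv_pos.2; linarith
        nlinarith [Real.exp_pos (-11.1)]

lemma Phi2_neg {c : ℝ} (h0 : 0 ≤ c) (h1 : c ≤ 1/100) : Phi2 c < 0 := by
  have hs1 : Summable (fun n : ℕ => gen KA 5 32 (-224) 330 (-75) (n + 1) c) :=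
    (summable_nat_add_iff (f := fun m : ℕ => gen KA 5 32 (-224) 330 (-75) m c) 1).2 (summable_gen KA 4 5 32 (-224) 330 (-75) (by norm_num)
      KA_bound (by norm_num) c)
  have hs2 : Summable (fun n : ℕ => gen KA 5 32 (-224) 330 (-75) (n + 2) c) :=
    (summable_nat_add_iff (f := fun m : ℕ => gen KA 5 32 (-224) 330 (-75) m c) 2).2 (summable_gen KA 4 5 32 (-224) 330 (-75) (by norm_num)
      KA_bound (by norm_num) c)
  have e1 : Phi2 c = gen KA 5 32 (-224) 330 (-75) 1 c
      + ∑' n : ℕ, gen KA 5 32 (-224) 330 (-75) (n + 2) c := by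
    rw [Phi2, Summable.tsum_eq_zero_add hs1]
  have e2 : (∑' n : ℕ, gen KA 5 32 (-224) 330 (-75) (n + 2) c)
      = gen KA 5 32 (-224) 330 (-75) 2 c
      + ∑' n : ℕ, gen KA 5 32 (-224) 330 (-75) (n + 3) c := by
    rw [Summable.tsum_eq_zero_add hs2]
  rw [e1, e2]
  have := A2_one_bound h0 h1
  have := A2_two_bound h0 h1
  have := A2_tail_sum_bound h0 h1
  linarith

lemma A1_neg {m : ℕ} (hm : 1 ≤ m) {t : ℝ} (ht : 1/100 ≤ t) :
    gen KA 5 0 (-8) 30 (-15) m t < 0 := by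
  have hπl := Real.pi_gt_d6
  have hmr : (1:ℝ) ≤ (m:ℝ) := by exact_mod_cast hm
  simp only [gen, KA, uu]
  set u := Real.pi * (m:ℝ)^2 * Real.exp (4 * t) with hu
  have hE1 : (1.04:ℝ) ≤ Real.exp (4*t) := by
    have := Real.add_one_le_exp (4*t); linarith
  have hm2 : (1:ℝ) ≤ (m:ℝ)^2 := by nlinarith
  have hu1 : (3.2:ℝ) ≤ u := by
    rw [hu]
    have step : (3.141592:ℝ) ≤ Real.pi * (m:ℝ)^2 := by nlinarith [Real.pi_pos]
    have := mul_le_mul step hE1 (by norm_num) (by positivity :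
      (0:ℝ) ≤ Real.pi * (m:ℝ)^2)
    nlinarith
  have hP : 0 * u^3 + (-8) * u^2 + 30 * u + (-15) < 0 := by
    nlinarith [sq_nonneg (u - 3.2)]
  have hK : 0 < Real.pi * (m:ℝ)^2 := by nlinarith [Real.pi_pos]
  have hX : 0 < Real.exp (5*t - u) := Real.exp_pos _
  calc Real.pi * (m:ℝ)^2 * (0 * u^3 + (-8) * u^2 + 30 * u + (-15)) * Real.exp (5*t-u)
      < 0 := by
        apply mul_neg_of_neg_of_pos ?_ hX
        exact mul_neg_of_pos_of_neg hK hP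

lemma summable_Phi1_terms (t : ℝ) :
    Summable (fun n : ℕ => gen KA 5 0 (-8) 30 (-15) (n + 1) t) :=
  summable_gen_shift KA 4 5 0 (-8) 30 (-15) (by norm_num) KA_bound (by norm_num) t

lemma Phi1_neg_of_large {t : ℝ} (ht : 1/100 ≤ t) : Phi1 t < 0 := by
  have hpos : 0 < ∑' n : ℕ, -(gen KA 5 0 (-8) 30 (-15) (n + 1) t) := by
    apply Summable.tsum_pos ((summable_Phi1_terms t).neg)
      (fun n => by linarith [A1_neg (show 1 ≤ n+1 by omega) ht]) 0
    linarith [A1_neg (show 1 ≤ 0+1 by omega) ht]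
  rw [tsum_neg] at hpos
  simp only [Phi1]
  linarith

lemma deriv_jacobiPhi : deriv jacobiPhi = Phi1 :=
  funext fun t => (hasDerivAt_jacobiPhi t).deriv

lemma Phi1_odd (t : ℝ) : Phi1 (-t) = -Phi1 t := by
  have hWe : (fun s : ℝ => jacobiPhi (-s)) = jacobiPhi := funext fun s => jacobiPhi_even s
  have h1 : deriv (fun s : ℝ => jacobiPhi (-s)) t = -deriv jacobiPhi (-t) :=
    deriv_comp_neg jacobiPhi t
  rw [hWe, deriv_jacobiPhi] at h1
  linarith [h1]

lemma Phi1_zero : Phi1 0 = 0 := by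
  have := Phi1_odd 0
  simp at this
  linarith

lemma Phi1_neg_of_pos {t : ℝ} (ht : 0 < t) : Phi1 t < 0 := by
  rcases le_or_gt (1/100) t with h | h
  · exact Phi1_neg_of_large h
  · -- MVT on [0, t]
    have hcont : ContinuousOn Phi1 (Set.Icc 0 t) := by
      apply Continuous.continuousOn
      exact continuous_iff_continuousAt.2 fun s => (hasDerivAt_Phi1 s).continuousAt
    have hderiv : ∀ x ∈ Set.Ioo (0:ℝ) t, HasDerivAt Phi1 (Phi2 x) x :=
      fun x _ => hasDerivAt_Phi1 x
    obtain ⟨c, hc, hceq⟩ := exists_hasDerivAt_eq_slope Phi1 Phi2 ht hcont hderiv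
    have hc2 : Phi2 c < 0 := Phi2_neg hc.1.le (by linarith [hc.2])
    have : Phi2 c = Phi1 t / t := by rw [hceq, Phi1_zero]; ring_nf
    have htpos : 0 < t := ht
    have : Phi1 t = Phi2 c * t := by
      field_simp at this
      linarith [this]
    nlinarith

/-- **Theorem 4.1 (i), (iii), (v).** For the Jacobi theta kernel `Φ(t) = ∑ₙ aₙ(t)`:
(i) each `aₙ(t) > 0` for `t ≥ 0`, hence `Φ(t) > 0` for `t ≥ 0`;
(ii) `Φ` is even; and (iii) `Φ′(t) < 0` for all `t > 0`. -/
theorem thm_4_1 :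
    (∀ n : ℕ, 1 ≤ n → ∀ t : ℝ, 0 ≤ t → 0 < jacobiA n t) ∧
    (∀ t : ℝ, 0 ≤ t → 0 < jacobiPhi t) ∧
    (∀ t : ℝ, jacobiPhi (-t) = jacobiPhi t) ∧
    (∀ t : ℝ, 0 < t → deriv jacobiPhi t < 0) := by
  refine ⟨fun n hn t ht => jacobiA_pos hn ht,
    fun t ht => jacobiPhi_pos ht,
    fun t => jacobiPhi_even t,
    fun t ht => ?_⟩
  rw [deriv_jacobiPhi]
  exact Phi1_neg_of_pos ht
end
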